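/- The group R of rational homeomorphisms of Cantor space is generated by its elements of small support; consequently R equals its commutator subgroup [R, R]. -/

import Mathlib

/-- The Cantor space of infinite binary sequences. -/
abbrev Cantor : Type := ℕ → Bool

/-- Prepend a finite binary word to an infinite binary sequence. -/
def prepend (α : List Bool) (ψ : Cantor) : Cantor :=
  fun n => if h : n < α.length then α.get ⟨n, h⟩ else ψ (n - α.length)

/-- The basic clopen cone `I_α` of sequences beginning with the finite word `α`. -/
def cone (α : List Bool) : Set Cantor :=
  {ψ | ∀ i (h : i < α.length), ψ i = α.get ⟨i, h⟩}

/-- An asynchronous binary transducer with state set `S` (the initial state `s0`,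
the transition function `t` and the output function `o`). -/
structure Transducer (S : Type) where
  s0 : S
  t : S → Bool → S
  o : S → Bool → List Bool

/-- The extended transition function on finite binary words. -/
def Transducer.tStar {S : Type} (T : Transducer S) : S → List Bool → S
  | s, [] => s
  | s, b :: α => T.tStar (T.t s b) α

/-- The extended output function on finite binary words. -/
def Transducer.oStar {S : Type} (T : Transducer S) : S → List Bool → List Bool
  | _, [] => []
  | s, b :: α => T.o s b ++ T.oStar (T.t s b) α

/-- The length-`n` prefix of an infinite binary sequence, as a finite word. -/
def prefixWord (ψ : Cantor) (n : ℕ) : List Bool := (List.range n).map ψ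

/-- `l` is a prefix of the infinite sequence `ψ`. -/
def IsPrefixOf (l : List Bool) (ψ : Cantor) : Prop :=
  ∀ i (h : i < l.length), l.get ⟨i, h⟩ = ψ i

/-- The transducer `T` computes the map `f` on infinite binary sequences: on every input
`ψ` the finite outputs along the run are prefixes of `f ψ`, and their lengths tend to
infinity, so that the infinite concatenated output is exactly `f ψ`. -/
def Transducer.Computes {S : Type} (T : Transducer S) (f : Cantor → Cantor) : Prop :=
  ∀ ψ : Cantor, (∀ n, IsPrefixOf (T.oStar T.s0 (prefixWord ψ n)) (f ψ)) ∧
    (∀ k, ∃ n, k ≤ (T.oStar T.s0 (prefixWord ψ n)).length)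

/-- A homeomorphism of the Cantor space is rational if some asynchronous binary
transducer (with finitely many states) computes it. -/
def IsRational (f : Cantor ≃ₜ Cantor) : Prop :=
  ∃ (n : ℕ) (T : Transducer (Fin n)), T.Computes ⇑f

/-- `r` is the restriction `f|_α`: there is a finite word `β` (necessarily the longest
common prefix of `f(I_α)`) with `f(αω) = β · r(ω)` for all `ω`, where maximality of `β`
is expressed by saying that the outputs of `r` do not all share their first digit. -/
def IsRestrictionAt (f : Cantor ≃ₜ Cantor) (α : List Bool) (r : Cantor → Cantor) : Prop :=
  ∃ β : List Bool, (∀ ψ : Cantor, f (prepend α ψ) = prepend β (r ψ)) ∧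
    ∃ ψ ψ' : Cantor, r ψ 0 ≠ r ψ' 0

/-- The set of all restrictions of `f` as `α` ranges over finite binary words. -/
def restrictions (f : Cantor ≃ₜ Cantor) : Set (Cantor → Cantor) :=
  {r | ∃ α : List Bool, IsRestrictionAt f α r}

/-- `f` has finitely many distinct restrictions. -/
def FinitelyManyRestrictions (f : Cantor ≃ₜ Cantor) : Prop :=
  (restrictions f).Finite

/-- The group of self-homeomorphisms of the Cantor space, with `(f * g) x = f (g x)`. -/
instance : Group (Cantor ≃ₜ Cantor) where
  mul f g := g.trans f
  one := Homeomorph.refl _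
  inv := Homeomorph.symm
  mul_assoc _ _ _ := rfl
  one_mul _ := rfl
  mul_one _ := rfl
  inv_mul_cancel f := Homeomorph.ext fun x => f.symm_apply_apply x

/-- `k` is the homeomorphism `(f, g)`, acting as `f` on `I₀` and as `g` on `I₁`. -/
def IsPair (k f g : Cantor ≃ₜ Cantor) : Prop :=
  (∀ ζ : Cantor, k (prepend [false] ζ) = prepend [false] (f ζ)) ∧
  (∀ ζ : Cantor, k (prepend [true] ζ) = prepend [true] (g ζ))

/-- `x₀` is the first generator of Thompson's group `F`. -/
def IsX0 (x₀ : Cantor ≃ₜ Cantor) : Prop :=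
  (∀ ζ : Cantor, x₀ (prepend [false, false] ζ) = prepend [false] ζ) ∧
  (∀ ζ : Cantor, x₀ (prepend [false, true] ζ) = prepend [true, false] ζ) ∧
  (∀ ζ : Cantor, x₀ (prepend [true] ζ) = prepend [true, true] ζ)

/-- `f` has small support: it is the identity outside a proper nonempty clopen set. -/
def HasSmallSupport (f : Cantor ≃ₜ Cantor) : Prop :=
  ∃ E : Set Cantor, IsClopen E ∧ E.Nonempty ∧ E ≠ Set.univ ∧ ∀ ψ ∉ E, f ψ = ψ

/-- A group `G` of homeomorphisms of the Cantor space is full if every homeomorphism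
that locally agrees with `G` belongs to `G`. -/
def Full (G : Subgroup (Cantor ≃ₜ Cantor)) : Prop :=
  ∀ h : Cantor ≃ₜ Cantor,
    (∀ p : Cantor, ∃ U : Set Cantor, IsOpen U ∧ p ∈ U ∧ ∃ g ∈ G, ∀ x ∈ U, h x = g x) →
    h ∈ G

/-- A group `G` of homeomorphisms of the Cantor space is flexible if for all proper
nonempty clopen sets `E₁, E₂` there is `g ∈ G` with `g(E₁) ⊆ E₂`. -/
def Flexible (G : Subgroup (Cantor ≃ₜ Cantor)) : Prop :=
  ∀ E₁ E₂ : Set Cantor, IsClopen E₁ → E₁.Nonempty → E₁ ≠ Set.univ →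
    IsClopen E₂ → E₂.Nonempty → E₂ ≠ Set.univ →
    ∃ g ∈ G, ⇑g '' E₁ ⊆ E₂

/-- The map flipping every `p`-th binary digit (digits are indexed from 1, so the
digit at index `n : ℕ` is the `(n+1)`-st digit). -/
def flipFun (p : ℕ) (ψ : Cantor) : Cantor :=
  fun n => if p ∣ (n + 1) then !(ψ n) else ψ n

section CantorAux

/-- Shift an infinite sequence left by `L`. -/
def shifts (L : ℕ) (ψ : Cantor) : Cantor := fun n => ψ (n + L)

theorem prepend_apply_lt (α : List Bool) (ψ : Cantor) {n : ℕ} (h : n < α.length) :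
    prepend α ψ n = α.get ⟨n, h⟩ := dif_pos h

theorem prepend_apply_ge (α : List Bool) (ψ : Cantor) {n : ℕ} (h : α.length ≤ n) :
    prepend α ψ n = ψ (n - α.length) := dif_neg (by omega)

@[simp] theorem prefixWord_length (ψ : Cantor) (n : ℕ) : (prefixWord ψ n).length = n := by
  simp [prefixWord]

theorem prefixWord_getElem (ψ : Cantor) (n i : ℕ) (h : i < (prefixWord ψ n).length) :
    (prefixWord ψ n)[i] = ψ i := by
  simp [prefixWord] at h ⊢

theorem prepend_prefixWord_shifts (ψ : Cantor) (L : ℕ) :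
    prepend (prefixWord ψ L) (shifts L ψ) = ψ := by
  funext n
  by_cases h : n < L
  · rw [prepend_apply_lt _ _ (by simpa using h)]
    simp [List.get_eq_getElem, prefixWord_getElem]
  · rw [prepend_apply_ge _ _ (by simpa using not_lt.1 h)]
    simp only [prefixWord_length, shifts]
    congr 1; omega

theorem shifts_prepend (α : List Bool) (ψ : Cantor) {k : ℕ} (hk : k ≤ α.length) :
    shifts k (prepend α ψ) = prepend (α.drop k) ψ := by
  funext n
  simp only [shifts]
  by_cases h : n + k < α.length
  · rw [prepend_apply_lt _ _ h, prepend_apply_lt _ _ (show n < (α.drop k).length by simp; omega)]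
    simp [List.get_eq_getElem, List.getElem_drop]
    congr 1; omega
  · rw [prepend_apply_ge _ _ (by omega), prepend_apply_ge _ _ (by simp; omega)]
    congr 1; simp; omega

theorem shifts_prepend_all (α : List Bool) (ψ : Cantor) :
    shifts α.length (prepend α ψ) = ψ := by
  rw [shifts_prepend α ψ le_rfl, List.drop_length]
  funext n
  rw [prepend_apply_ge _ _ (by simp)]
  simp

theorem prefixWord_prepend_le (α : List Bool) (ψ : Cantor) {n : ℕ} (h : n ≤ α.length) :
    prefixWord (prepend α ψ) n = α.take n := by
  apply List.ext_getElem (by simp; omega)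
  intro i h1 h2
  rw [prefixWord_getElem, List.getElem_take, prepend_apply_lt _ _ (by simp at h1; omega)]
  simp [List.get_eq_getElem]

theorem prefixWord_prepend (α : List Bool) (ψ : Cantor) :
    prefixWord (prepend α ψ) α.length = α := by
  rw [prefixWord_prepend_le _ _ le_rfl, List.take_length]

theorem prefixWord_add (ψ : Cantor) (m k : ℕ) :
    prefixWord ψ (m + k) = prefixWord ψ m ++ prefixWord (shifts m ψ) k := by
  apply List.ext_getElem (by simp)
  intro i h1 h2
  rw [prefixWord_getElem]
  rcases lt_or_ge i m with h | h
  · rw [List.getElem_append_left (by simpa using h), prefixWord_getElem]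
  · rw [List.getElem_append_right (by simpa using h)]
    rw [prefixWord_getElem]
    simp [shifts]; congr 1; omega

theorem prefixWord_succ (ψ : Cantor) (n : ℕ) :
    prefixWord ψ (n + 1) = prefixWord ψ n ++ [ψ n] := by
  rw [prefixWord_add]
  simp [prefixWord, List.range_succ, shifts]

theorem prepend_prepend (α β : List Bool) (ψ : Cantor) :
    prepend α (prepend β ψ) = prepend (α ++ β) ψ := by
  funext n
  by_cases h1 : n < α.length
  · rw [prepend_apply_lt _ _ h1, prepend_apply_lt _ _ (show n < (α ++ β).length by simp; omega)]
    simp [List.get_eq_getElem, List.getElem_append_left h1]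
  · rw [prepend_apply_ge _ _ (by omega)]
    by_cases h2 : n - α.length < β.length
    · rw [prepend_apply_lt _ _ h2, prepend_apply_lt _ _ (show n < (α ++ β).length by simp; omega)]
      simp [List.get_eq_getElem]
      rw [List.getElem_append_right (by omega)]
    · rw [prepend_apply_ge _ _ (by omega), prepend_apply_ge _ _ (by simp; omega)]
      congr 1; simp; omega

theorem mem_cone_iff (α : List Bool) (ψ : Cantor) :
    ψ ∈ cone α ↔ prefixWord ψ α.length = α := by
  constructor
  · intro h
    apply List.ext_getElem (by simp)
    intro i h1 h2
    rw [prefixWord_getElem]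
    exact (h i h2).symm ▸ rfl
  · intro h i hi
    have h2 : i < (prefixWord ψ α.length).length := by simp; omega
    rw [List.get_eq_getElem]
    have h4 : (prefixWord ψ α.length)[i]? = α[i]? := by rw [h]
    rw [List.getElem?_eq_getElem h2, List.getElem?_eq_getElem hi, prefixWord_getElem] at h4
    exact Option.some_inj.mp h4

theorem prepend_mem_cone (α : List Bool) (ψ : Cantor) : prepend α ψ ∈ cone α := by
  rw [mem_cone_iff, prefixWord_prepend]

theorem mem_cone_iff_exists (α : List Bool) (ψ : Cantor) :
    ψ ∈ cone α ↔ ∃ ξ, ψ = prepend α ξ := by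
  constructor
  · intro h
    refine ⟨shifts α.length ψ, ?_⟩
    conv_lhs => rw [← prepend_prefixWord_shifts ψ α.length]
    rw [(mem_cone_iff α ψ).1 h]
  · rintro ⟨ξ, rfl⟩; exact prepend_mem_cone α ξ

end CantorAux


section CantorTop

theorem isClopen_cone (α : List Bool) : IsClopen (cone α) := by
  have h : cone α = ⋂ i : Fin α.length, {ψ : Cantor | ψ i = α.get i} := by
    ext ψ
    simp only [cone, Set.mem_setOf_eq, Set.mem_iInter]
    exact ⟨fun h i => h i i.isLt, fun h i hi => h ⟨i, hi⟩⟩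
  rw [h]
  apply isClopen_iInter_of_finite
  intro i
  exact (isClopen_discrete {(α.get i)}).preimage (continuous_apply (i : ℕ))

theorem mem_cone_prefixWord (χ ψ : Cantor) (n : ℕ) :
    χ ∈ cone (prefixWord ψ n) ↔ ∀ i < n, χ i = ψ i := by
  constructor
  · intro h i hi
    have := h i (by simpa using hi)
    rwa [List.get_eq_getElem, prefixWord_getElem] at this
  · intro h i hi
    rw [List.get_eq_getElem, prefixWord_getElem]
    exact h i (by simpa using hi)

theorem cone_prefixWord_mono (ψ : Cantor) {n n' : ℕ} (h : n ≤ n') :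
    cone (prefixWord ψ n') ⊆ cone (prefixWord ψ n) := by
  intro χ hχ
  rw [mem_cone_prefixWord] at hχ ⊢
  exact fun i hi => hχ i (lt_of_lt_of_le hi h)

theorem self_mem_cone_prefixWord (ψ : Cantor) (n : ℕ) : ψ ∈ cone (prefixWord ψ n) := by
  rw [mem_cone_prefixWord]; intro i _; rfl

theorem exists_cone_subset {U : Set Cantor} (hU : IsOpen U) {ψ : Cantor} (hψ : ψ ∈ U) :
    ∃ n, cone (prefixWord ψ n) ⊆ U := by
  rw [isOpen_pi_iff] at hU
  obtain ⟨I, u, hIu, hsub⟩ := hU ψ hψ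
  refine ⟨(I.sup id) + 1, fun χ hχ => hsub ?_⟩
  intro i hi
  have : χ i = ψ i := (mem_cone_prefixWord χ ψ _).1 hχ i
    (Nat.lt_succ_of_le (Finset.le_sup (f := id) hi))
  rw [this]
  exact (hIu i hi).2

theorem clopen_saturated {C : Set Cantor} (hC : IsClopen C) :
    ∃ N, ∀ ψ ∈ C, cone (prefixWord ψ N) ⊆ C := by
  have hcomp : IsCompact C := hC.isClosed.isCompact
  have hn : ∀ p : C, ∃ n, cone (prefixWord (p : Cantor) n) ⊆ C := fun p =>
    exists_cone_subset hC.isOpen p.2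
  choose n hn using hn
  obtain ⟨t, ht⟩ := hcomp.elim_finite_subcover
    (fun p : C => cone (prefixWord (p : Cantor) (n p)))
    (fun p => (isClopen_cone _).isOpen)
    (fun ψ hψ => Set.mem_iUnion.2 ⟨⟨ψ, hψ⟩, self_mem_cone_prefixWord _ _⟩)
  refine ⟨t.sup n, fun ψ hψ => ?_⟩
  obtain ⟨p, hp, hmem⟩ := Set.mem_iUnion₂.1 (ht hψ)
  have h1 : prefixWord ψ (n p) = prefixWord (p : Cantor) (n p) := by
    have := (mem_cone_iff _ ψ).1 hmem
    simpa using this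
  calc cone (prefixWord ψ (t.sup n)) ⊆ cone (prefixWord ψ (n p)) :=
        cone_prefixWord_mono ψ (Finset.le_sup hp)
    _ ⊆ C := by rw [h1]; exact hn p

theorem isPrefixOf_nil (ψ : Cantor) : IsPrefixOf [] ψ := by
  intro i h; simp at h

theorem isPrefixOf_prefixWord (ψ : Cantor) (n : ℕ) : IsPrefixOf (prefixWord ψ n) ψ := by
  intro i h
  rw [List.get_eq_getElem, prefixWord_getElem]

theorem IsPrefixOf.append {u : List Bool} {ξ : Cantor} (β : List Bool)
    (h : IsPrefixOf u ξ) : IsPrefixOf (β ++ u) (prepend β ξ) := by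
  intro i hi
  rcases lt_or_ge i β.length with h1 | h1
  · rw [List.get_eq_getElem, List.getElem_append_left h1, prepend_apply_lt _ _ h1]
    rw [List.get_eq_getElem]
  · rw [List.get_eq_getElem, List.getElem_append_right h1, prepend_apply_ge _ _ h1]
    have := h (i - β.length) (by simp at hi; omega)
    rw [List.get_eq_getElem] at this
    exact this

theorem IsPrefixOf.dropPrefix {u : List Bool} {ψ : Cantor} (k : ℕ)
    (h : IsPrefixOf u ψ) : IsPrefixOf (u.drop k) (shifts k ψ) := by
  intro i hi
  rw [List.get_eq_getElem, List.getElem_drop]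
  have := h (k + i) (by simp at hi; omega)
  rw [List.get_eq_getElem] at this
  rw [this]
  simp [shifts]
  congr 1; omega

theorem Transducer.tStar_append {S : Type} (T : Transducer S) (s : S) (u v : List Bool) :
    T.tStar s (u ++ v) = T.tStar (T.tStar s u) v := by
  induction u generalizing s with
  | nil => rfl
  | cons b u ih => simp [Transducer.tStar, ih]

theorem Transducer.oStar_append {S : Type} (T : Transducer S) (s : S) (u v : List Bool) :
    T.oStar s (u ++ v) = T.oStar s u ++ T.oStar (T.tStar s u) v := by
  induction u generalizing s with
  | nil => rfl
  | cons b u ih => simp [Transducer.oStar, Transducer.tStar, ih]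

theorem Transducer.oStar_length_mono {S : Type} (T : Transducer S) (s : S) (ψ : Cantor)
    {n n' : ℕ} (h : n ≤ n') :
    (T.oStar s (prefixWord ψ n)).length ≤ (T.oStar s (prefixWord ψ n')).length := by
  obtain ⟨k, rfl⟩ := Nat.exists_eq_add_of_le h
  rw [prefixWord_add, Transducer.oStar_append]
  simp

theorem continuous_of_locally {f : Cantor → Cantor}
    (h : ∀ x : Cantor, ∃ U : Set Cantor, IsOpen U ∧ x ∈ U ∧
      ∃ g : Cantor → Cantor, Continuous g ∧ ∀ y ∈ U, f y = g y) : Continuous f := by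
  rw [continuous_iff_continuousAt]
  intro x
  obtain ⟨U, hU, hx, g, hg, hfg⟩ := h x
  exact (hg.continuousAt).congr
    (Filter.eventuallyEq_of_mem (hU.mem_nhds hx) (fun y hy => (hfg y hy).symm))

theorem continuous_prepend (α : List Bool) : Continuous (fun ψ : Cantor => prepend α ψ) := by
  apply continuous_pi; intro n
  by_cases h : n < α.length
  · simp only [prepend, dif_pos h]; exact continuous_const
  · simp only [prepend, dif_neg h]; exact continuous_apply _

theorem continuous_shifts (L : ℕ) : Continuous (shifts L) := by
  apply continuous_pi; intro n
  exact continuous_apply _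

end CantorTop


section Glue

@[simp] theorem Transducer.tStar_nil {S : Type} (T : Transducer S) (s : S) :
    T.tStar s [] = s := rfl

@[simp] theorem Transducer.oStar_nil {S : Type} (T : Transducer S) (s : S) :
    T.oStar s [] = [] := rfl

theorem Transducer.tStar_cons {S : Type} (T : Transducer S) (s : S) (b : Bool) (w : List Bool) :
    T.tStar s (b :: w) = T.tStar (T.t s b) w := rfl

theorem Transducer.oStar_cons {S : Type} (T : Transducer S) (s : S) (b : Bool) (w : List Bool) :
    T.oStar s (b :: w) = T.o s b ++ T.oStar (T.t s b) w := rfl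

/-- The one-state copy transducer. -/
def copyT : Transducer (Fin 1) := ⟨0, fun _ _ => 0, fun _ b => [b]⟩

theorem copyT_oStar (s : Fin 1) (w : List Bool) : copyT.oStar s w = w := by
  induction w generalizing s with
  | nil => rfl
  | cons b w ih =>
    rw [Transducer.oStar_cons, show copyT.t s b = 0 from rfl,
      show copyT.o s b = [b] from rfl, ih]
    rfl

/-- Transport a transducer along an equivalence of state sets. -/
def Transducer.mapEquiv {S S' : Type} (T : Transducer S) (e : S ≃ S') : Transducer S' :=
  ⟨e T.s0, fun s b => e (T.t (e.symm s) b), fun s b => T.o (e.symm s) b⟩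

theorem Transducer.mapEquiv_tStar {S S' : Type} (T : Transducer S) (e : S ≃ S')
    (s : S) (w : List Bool) : (T.mapEquiv e).tStar (e s) w = e (T.tStar s w) := by
  induction w generalizing s with
  | nil => rfl
  | cons b w ih =>
    rw [Transducer.tStar_cons]
    have ht : (T.mapEquiv e).t (e s) b = e (T.t s b) := by
      show e (T.t (e.symm (e s)) b) = _
      rw [Equiv.symm_apply_apply]
    rw [ht, ih, Transducer.tStar_cons]

theorem Transducer.mapEquiv_oStar {S S' : Type} (T : Transducer S) (e : S ≃ S')
    (s : S) (w : List Bool) : (T.mapEquiv e).oStar (e s) w = T.oStar s w := by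
  induction w generalizing s with
  | nil => rfl
  | cons b w ih =>
    rw [Transducer.oStar_cons, Transducer.oStar_cons]
    have ht : (T.mapEquiv e).t (e s) b = e (T.t s b) := by
      show e (T.t (e.symm (e s)) b) = _
      rw [Equiv.symm_apply_apply]
    have ho : (T.mapEquiv e).o (e s) b = T.o s b := by
      show T.o (e.symm (e s)) b = _
      rw [Equiv.symm_apply_apply]
    rw [ht, ho, ih]

theorem Transducer.mapEquiv_computes {S S' : Type} (T : Transducer S) (e : S ≃ S')
    {f : Cantor → Cantor} (h : T.Computes f) : (T.mapEquiv e).Computes f := by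
  intro ψ
  have h0 : (T.mapEquiv e).s0 = e T.s0 := rfl
  constructor
  · intro n
    rw [h0, Transducer.mapEquiv_oStar]
    exact (h ψ).1 n
  · intro k
    obtain ⟨n, hn⟩ := (h ψ).2 k
    exact ⟨n, by rw [h0, Transducer.mapEquiv_oStar]; exact hn⟩

theorem isRational_of_computes {f : Cantor ≃ₜ Cantor} {S : Type} [Fintype S]
    (T : Transducer S) (h : T.Computes ⇑f) : IsRational f :=
  ⟨Fintype.card S, T.mapEquiv (Fintype.equivFin S), T.mapEquiv_computes _ h⟩

/-- Pad a transducer on `Fin n` to one on `Fin M`. -/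
def Transducer.pad {n M : ℕ} (T : Transducer (Fin n)) (h : n ≤ M) : Transducer (Fin M) :=
  ⟨Fin.castLE h T.s0,
   fun s b => if hs : (s : ℕ) < n then Fin.castLE h (T.t ⟨s, hs⟩ b) else s,
   fun s b => if hs : (s : ℕ) < n then T.o ⟨s, hs⟩ b else []⟩

theorem Transducer.pad_tStar {n M : ℕ} (T : Transducer (Fin n)) (h : n ≤ M)
    (s : Fin n) (w : List Bool) :
    (T.pad h).tStar (Fin.castLE h s) w = Fin.castLE h (T.tStar s w) := by
  induction w generalizing s with
  | nil => rfl
  | cons b w ih =>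
    rw [Transducer.tStar_cons]
    have hkey : (⟨((Fin.castLE h s : Fin M) : ℕ), s.isLt⟩ : Fin n) = s := by
      apply Fin.ext; simp
    have ht : (T.pad h).t (Fin.castLE h s) b = Fin.castLE h (T.t s b) := by
      show (if hs : ((Fin.castLE h s : Fin M) : ℕ) < n then _ else _) = _
      rw [dif_pos (show ((Fin.castLE h s : Fin M) : ℕ) < n from s.isLt), hkey]
    rw [ht, ih, Transducer.tStar_cons]

theorem Transducer.pad_oStar {n M : ℕ} (T : Transducer (Fin n)) (h : n ≤ M)
    (s : Fin n) (w : List Bool) :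
    (T.pad h).oStar (Fin.castLE h s) w = T.oStar s w := by
  induction w generalizing s with
  | nil => rfl
  | cons b w ih =>
    rw [Transducer.oStar_cons, Transducer.oStar_cons]
    have hkey : (⟨((Fin.castLE h s : Fin M) : ℕ), s.isLt⟩ : Fin n) = s := by
      apply Fin.ext; simp
    have ht : (T.pad h).t (Fin.castLE h s) b = Fin.castLE h (T.t s b) := by
      show (if hs : ((Fin.castLE h s : Fin M) : ℕ) < n then _ else _) = _
      rw [dif_pos (show ((Fin.castLE h s : Fin M) : ℕ) < n from s.isLt), hkey]
    have ho : (T.pad h).o (Fin.castLE h s) b = T.o s b := by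
      show (if hs : ((Fin.castLE h s : Fin M) : ℕ) < n then _ else _) = _
      rw [dif_pos (show ((Fin.castLE h s : Fin M) : ℕ) < n from s.isLt), hkey]
    rw [ht, ho, ih]

theorem ofFn_eq_prefixWord (ψ : Cantor) (N : ℕ) :
    List.ofFn (fun i : Fin N => ψ (i : ℕ)) = prefixWord ψ N := by
  apply List.ext_getElem (by simp)
  intro i h1 h2
  rw [List.getElem_ofFn, prefixWord_getElem]

/-- State space of the glued transducer. -/
abbrev GlueState (N K : ℕ) : Type := (Fin N × (Fin N → Bool)) ⊕ ((Fin N → Bool) × Fin K)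

/-- The glued transducer: read `N` bits, output `ini γ`, then simulate `M γ` from `sI γ`. -/
def glueT (N K : ℕ) (hN : 0 < N) (M : List Bool → Transducer (Fin K))
    (sI : List Bool → Fin K) (ini : List Bool → List Bool) :
    Transducer (GlueState N K) where
  s0 := Sum.inl (⟨0, hN⟩, fun _ => false)
  t := fun s b => match s with
    | Sum.inl (k, v) =>
        if h : (k : ℕ) + 1 < N then Sum.inl (⟨(k : ℕ) + 1, h⟩, Function.update v k b)
        else Sum.inr (Function.update v k b, sI (List.ofFn (Function.update v k b)))
    | Sum.inr (γ, s) => Sum.inr (γ, (M (List.ofFn γ)).t s b)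
  o := fun s b => match s with
    | Sum.inl (k, v) =>
        if (k : ℕ) + 1 < N then []
        else ini (List.ofFn (Function.update v k b))
    | Sum.inr (γ, s) => (M (List.ofFn γ)).o s b

theorem glueT_inr_tStar (N K : ℕ) (hN : 0 < N) (M : List Bool → Transducer (Fin K))
    (sI : List Bool → Fin K) (ini : List Bool → List Bool) (γ : Fin N → Bool) (s : Fin K)
    (w : List Bool) :
    (glueT N K hN M sI ini).tStar (Sum.inr (γ, s)) w
      = Sum.inr (γ, (M (List.ofFn γ)).tStar s w) := by
  induction w generalizing s with
  | nil => rfl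
  | cons b w ih =>
    rw [Transducer.tStar_cons]
    have ht : (glueT N K hN M sI ini).t (Sum.inr (γ, s)) b
        = Sum.inr (γ, (M (List.ofFn γ)).t s b) := rfl
    rw [ht, ih, Transducer.tStar_cons]

theorem glueT_inr_oStar (N K : ℕ) (hN : 0 < N) (M : List Bool → Transducer (Fin K))
    (sI : List Bool → Fin K) (ini : List Bool → List Bool) (γ : Fin N → Bool) (s : Fin K)
    (w : List Bool) :
    (glueT N K hN M sI ini).oStar (Sum.inr (γ, s)) w
      = (M (List.ofFn γ)).oStar s w := by
  induction w generalizing s with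
  | nil => rfl
  | cons b w ih =>
    rw [Transducer.oStar_cons]
    have ht : (glueT N K hN M sI ini).t (Sum.inr (γ, s)) b
        = Sum.inr (γ, (M (List.ofFn γ)).t s b) := rfl
    have ho : (glueT N K hN M sI ini).o (Sum.inr (γ, s)) b
        = (M (List.ofFn γ)).o s b := rfl
    rw [ht, ho, ih, Transducer.oStar_cons]

theorem glueT_read (N K : ℕ) (hN : 0 < N) (M : List Bool → Transducer (Fin K))
    (sI : List Bool → Fin K) (ini : List Bool → List Bool) (ψ : Cantor) :
    ∀ n, n ≤ N →
      ((glueT N K hN M sI ini).tStar (glueT N K hN M sI ini).s0 (prefixWord ψ n) =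
        (if h : n < N then
          (Sum.inl (⟨n, h⟩, fun i : Fin N => if (i : ℕ) < n then ψ (i : ℕ) else false)
            : GlueState N K)
         else (Sum.inr ((fun i : Fin N => ψ (i : ℕ)), sI (prefixWord ψ N)) : GlueState N K))) ∧
      ((glueT N K hN M sI ini).oStar (glueT N K hN M sI ini).s0 (prefixWord ψ n) =
        (if n < N then [] else ini (prefixWord ψ N))) := by
  intro n
  induction n with
  | zero =>
    intro _
    constructor
    · rw [dif_pos hN]
      have hv : (fun i : Fin N => if (i : ℕ) < 0 then ψ (i : ℕ) else false)
          = (fun _ : Fin N => false) := by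
        funext i; rw [if_neg (by omega)]
      rw [hv]
      rfl
    · rw [if_pos hN]
      rfl
  | succ n ih =>
    intro hn1
    have hn : n < N := by omega
    obtain ⟨iht, iho⟩ := ih (le_of_lt hn)
    rw [dif_pos hn] at iht
    rw [if_pos hn] at iho
    have hupd : Function.update (fun i : Fin N => if (i : ℕ) < n then ψ (i : ℕ) else false)
        ⟨n, hn⟩ (ψ n) = fun i : Fin N => if (i : ℕ) < n + 1 then ψ (i : ℕ) else false := by
      funext i
      rcases eq_or_ne i ⟨n, hn⟩ with rfl | hne
      · rw [Function.update_self]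
        have hlt : ((⟨n, hn⟩ : Fin N) : ℕ) < n + 1 := by show n < n + 1; omega
        rw [if_pos hlt]
      · have hi : (i : ℕ) ≠ n := fun hc => hne (Fin.ext hc)
        rw [Function.update_of_ne hne]
        by_cases hlt : (i : ℕ) < n
        · rw [if_pos hlt, if_pos (by omega)]
        · rw [if_neg hlt, if_neg (by omega)]
    have hofn : (fun i : Fin N => if (i : ℕ) < N then ψ (i : ℕ) else false)
        = fun i : Fin N => ψ (i : ℕ) := by
      funext i; rw [if_pos i.isLt]
    constructor
    · rw [prefixWord_succ, Transducer.tStar_append, iht]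
      show (glueT N K hN M sI ini).t _ (ψ n) = _
      show (if h : n + 1 < N then _ else _) = _
      by_cases h2 : n + 1 < N
      · rw [dif_pos h2, dif_pos h2, hupd]
      · have hNn : N = n + 1 := by omega
        rw [dif_neg h2, dif_neg h2, hupd]
        subst hNn
        rw [hofn, ofFn_eq_prefixWord]
    · rw [prefixWord_succ, Transducer.oStar_append, iho, iht]
      have hsingle : ∀ s, (glueT N K hN M sI ini).oStar s [ψ n]
          = (glueT N K hN M sI ini).o s (ψ n) := by
        intro s
        show (glueT N K hN M sI ini).o s (ψ n) ++ [] = _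
        rw [List.append_nil]
      rw [hsingle]
      show [] ++ (if n + 1 < N then [] else _) = _
      rw [List.nil_append]
      by_cases h2 : n + 1 < N
      · rw [if_pos h2, if_pos h2]
      · have hNn : N = n + 1 := by omega
        rw [if_neg h2, if_neg h2, hupd]
        subst hNn
        rw [hofn, ofFn_eq_prefixWord]

theorem glueT_computes (N K : ℕ) (hN : 0 < N) (M : List Bool → Transducer (Fin K))
    (sI : List Bool → Fin K) (ini : List Bool → List Bool) (h : Cantor → Cantor)
    (hyp : ∀ γ : List Bool, γ.length = N → ∀ ξ : Cantor,
      (∀ j, IsPrefixOf (ini γ ++ (M γ).oStar (sI γ) (prefixWord ξ j)) (h (prepend γ ξ))) ∧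
      (∀ k, ∃ j, k ≤ (ini γ ++ (M γ).oStar (sI γ) (prefixWord ξ j)).length)) :
    (glueT N K hN M sI ini).Computes h := by
  intro ψ
  set γ := prefixWord ψ N with hγ
  set ξ := shifts N ψ with hξ
  have hψ : prepend γ ξ = ψ := prepend_prefixWord_shifts ψ N
  obtain ⟨hpre, hlen⟩ := hyp γ (by rw [hγ, prefixWord_length]) ξ
  have key : ∀ j, (glueT N K hN M sI ini).oStar (glueT N K hN M sI ini).s0
      (prefixWord ψ (N + j)) = ini γ ++ (M γ).oStar (sI γ) (prefixWord ξ j) := by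
    intro j
    rw [prefixWord_add, Transducer.oStar_append]
    obtain ⟨ht, ho⟩ := glueT_read N K hN M sI ini ψ N le_rfl
    rw [dif_neg (lt_irrefl N)] at ht
    rw [if_neg (lt_irrefl N)] at ho
    rw [ht, ho, glueT_inr_oStar, ofFn_eq_prefixWord, ← hγ, ← hξ]
  constructor
  · intro n
    rcases le_or_gt n N with hle | hlt
    · obtain ⟨_, ho⟩ := glueT_read N K hN M sI ini ψ n hle
      rw [ho]
      by_cases h2 : n < N
      · rw [if_pos h2]; exact isPrefixOf_nil _
      · rw [if_neg h2]
        have h3 := hpre 0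
        rw [hψ] at h3
        have h0 : prefixWord ξ 0 = [] := rfl
        rw [h0, Transducer.oStar_nil, List.append_nil] at h3
        rw [← hγ]
        exact h3
    · obtain ⟨j, rfl⟩ := Nat.exists_eq_add_of_le (le_of_lt hlt)
      rw [key j]
      have := hpre j
      rwa [hψ] at this
  · intro k
    obtain ⟨j, hj⟩ := hlen k
    refine ⟨N + j, ?_⟩
    rw [key j]
    exact hj

end Glue


section Recode

theorem prefixWord_one (ψ : Cantor) : prefixWord ψ 1 = [ψ 0] := rfl

theorem prefixWord_two (ψ : Cantor) : prefixWord ψ 2 = [ψ 0, ψ 1] := rfl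

theorem prepend_one (ψ : Cantor) : prepend [ψ 0] (shifts 1 ψ) = ψ := by
  have := prepend_prefixWord_shifts ψ 1
  rwa [prefixWord_one] at this

theorem prepend_two (ψ : Cantor) : prepend [ψ 0, ψ 1] (shifts 2 ψ) = ψ := by
  have := prepend_prefixWord_shifts ψ 2
  rwa [prefixWord_two] at this

theorem shifts_prepend_ge (α : List Bool) (ψ : Cantor) {k : ℕ} (hk : α.length ≤ k) :
    shifts k (prepend α ψ) = shifts (k - α.length) ψ := by
  funext n
  simp only [shifts]
  rw [prepend_apply_ge _ _ (by omega)]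
  congr 1; omega

theorem prefixWord_prepend_ge (α : List Bool) (ψ : Cantor) {n : ℕ} (h : α.length ≤ n) :
    prefixWord (prepend α ψ) n = α ++ prefixWord ψ (n - α.length) := by
  obtain ⟨k, rfl⟩ := Nat.exists_eq_add_of_le h
  rw [prefixWord_add, prefixWord_prepend, shifts_prepend_all]
  congr 2
  omega

theorem prefixWord_take (ψ : Cantor) {k n : ℕ} (h : k ≤ n) :
    (prefixWord ψ n).take k = prefixWord ψ k := by
  apply List.ext_getElem (by simp; omega)
  intro i h1 h2
  rw [List.getElem_take, prefixWord_getElem, prefixWord_getElem]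

theorem prefixWord_split2 (ψ : Cantor) (m : ℕ) :
    prefixWord ψ (m + 2) = ψ 0 :: ψ 1 :: prefixWord (shifts 2 ψ) m := by
  have h : m + 2 = 2 + m := by omega
  rw [h, prefixWord_add, prefixWord_two]
  rfl

theorem prefixWord_split2' (ψ : Cantor) (m : ℕ) :
    prefixWord ψ (m + 2) = prefixWord ψ m ++ [ψ m, ψ (m + 1)] := by
  rw [prefixWord_add]
  congr 1
  show prefixWord (shifts m ψ) 2 = _
  rw [prefixWord_two]
  simp [shifts, Nat.add_comm]

/-- Uniform prefix recoding. -/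
def recode (L : ℕ) (F : List Bool → List Bool) : Cantor → Cantor :=
  fun ψ => prepend (F (prefixWord ψ L)) (shifts L ψ)

theorem recode_prepend (L : ℕ) (F : List Bool → List Bool) (α : List Bool) (ξ : Cantor)
    (h : α.length = L) : recode L F (prepend α ξ) = prepend (F α) ξ := by
  unfold recode
  rw [← h, prefixWord_prepend, shifts_prepend_all]

theorem continuous_recode (L : ℕ) (F : List Bool → List Bool) : Continuous (recode L F) := by
  apply continuous_of_locally
  intro ψ
  refine ⟨cone (prefixWord ψ L), (isClopen_cone _).isOpen, self_mem_cone_prefixWord ψ L,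
    fun χ => prepend (F (prefixWord ψ L)) (shifts L χ),
    (continuous_prepend _).comp (continuous_shifts L), ?_⟩
  intro y hy
  have h : prefixWord y L = prefixWord ψ L := by
    have := (mem_cone_iff _ y).1 hy
    simpa using this
  unfold recode
  rw [h]

theorem recode_computes (L : ℕ) (hL : 0 < L) (F : List Bool → List Bool) :
    (glueT L 1 hL (fun _ => copyT) (fun _ => 0) F).Computes (recode L F) := by
  apply glueT_computes
  intro γ hγ ξ
  constructor
  · intro j
    rw [copyT_oStar, recode_prepend L F γ ξ hγ]
    exact (isPrefixOf_prefixWord ξ j).append (F γ)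
  · intro k
    exact ⟨k, by rw [copyT_oStar]; simp⟩

/-- A homeomorphism given by a pair of mutually inverse recodings. -/
def recodeHomeo (L L' : ℕ) (F F' : List Bool → List Bool)
    (h1 : ∀ ψ, recode L' F' (recode L F ψ) = ψ)
    (h2 : ∀ ψ, recode L F (recode L' F' ψ) = ψ) : Cantor ≃ₜ Cantor where
  toFun := recode L F
  invFun := recode L' F'
  left_inv := h1
  right_inv := h2
  continuous_toFun := continuous_recode L F
  continuous_invFun := continuous_recode L' F'

theorem recodeHomeo_coe (L L' : ℕ) (F F' : List Bool → List Bool) (h1 h2) :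
    ⇑(recodeHomeo L L' F F' h1 h2) = recode L F := rfl

theorem recodeHomeo_isRational (L L' : ℕ) (hL : 0 < L) (F F' : List Bool → List Bool)
    (h1 h2) : IsRational (recodeHomeo L L' F F' h1 h2) := by
  apply isRational_of_computes (glueT L 1 hL (fun _ => copyT) (fun _ => 0) F)
  rw [recodeHomeo_coe]
  exact recode_computes L hL F

end Recode

section X0

def Fx0 : List Bool → List Bool
  | false :: false :: t => false :: t
  | false :: true :: t => true :: false :: t
  | true :: t => true :: true :: t
  | w => w

def Fx0inv : List Bool → List Bool
  | false :: t => false :: false :: t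
  | true :: false :: t => false :: true :: t
  | true :: true :: t => true :: t
  | w => w

theorem x0_left (ψ : Cantor) : recode 2 Fx0inv (recode 2 Fx0 ψ) = ψ := by
  conv_lhs => rw [← prepend_two ψ]
  conv_rhs => rw [← prepend_two ψ]
  set ξ := shifts 2 ψ with hξ
  clear_value ξ
  cases h0 : ψ 0 <;> cases h1 : ψ 1
  · -- [false, false]
    rw [recode_prepend 2 Fx0 [false, false] ξ rfl,
      show Fx0 [false, false] = [false] from rfl, ← prepend_one ξ, prepend_prepend]
    simp only [List.cons_append, List.nil_append]
    rw [recode_prepend 2 Fx0inv [false, ξ 0] (shifts 1 ξ) rfl,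
      show Fx0inv [false, ξ 0] = [false, false, ξ 0] from rfl,
      show ([false, false, ξ 0] : List Bool) = [false, false] ++ [ξ 0] from rfl,
      ← prepend_prepend, prepend_one ξ]
  · -- [false, true]
    rw [recode_prepend 2 Fx0 [false, true] ξ rfl,
      show Fx0 [false, true] = [true, false] from rfl,
      recode_prepend 2 Fx0inv [true, false] ξ rfl,
      show Fx0inv [true, false] = [false, true] from rfl]
  · -- [true, false]
    rw [recode_prepend 2 Fx0 [true, false] ξ rfl,
      show Fx0 [true, false] = [true, true, false] from rfl,
      show ([true, true, false] : List Bool) = [true, true] ++ [false] from rfl,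
      ← prepend_prepend,
      recode_prepend 2 Fx0inv [true, true] (prepend [false] ξ) rfl,
      show Fx0inv [true, true] = [true] from rfl, prepend_prepend]
    rfl
  · -- [true, true]
    rw [recode_prepend 2 Fx0 [true, true] ξ rfl,
      show Fx0 [true, true] = [true, true, true] from rfl,
      show ([true, true, true] : List Bool) = [true, true] ++ [true] from rfl,
      ← prepend_prepend,
      recode_prepend 2 Fx0inv [true, true] (prepend [true] ξ) rfl,
      show Fx0inv [true, true] = [true] from rfl, prepend_prepend]
    rfl

theorem x0_right (ψ : Cantor) : recode 2 Fx0 (recode 2 Fx0inv ψ) = ψ := by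
  conv_lhs => rw [← prepend_two ψ]
  conv_rhs => rw [← prepend_two ψ]
  set ξ := shifts 2 ψ with hξ
  clear_value ξ
  cases h0 : ψ 0 <;> cases h1 : ψ 1
  · -- [false, false]
    rw [recode_prepend 2 Fx0inv [false, false] ξ rfl,
      show Fx0inv [false, false] = [false, false, false] from rfl,
      show ([false, false, false] : List Bool) = [false, false] ++ [false] from rfl,
      ← prepend_prepend,
      recode_prepend 2 Fx0 [false, false] (prepend [false] ξ) rfl,
      show Fx0 [false, false] = [false] from rfl, prepend_prepend]
    rfl
  · -- [false, true]
    rw [recode_prepend 2 Fx0inv [false, true] ξ rfl,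
      show Fx0inv [false, true] = [false, false, true] from rfl,
      show ([false, false, true] : List Bool) = [false, false] ++ [true] from rfl,
      ← prepend_prepend,
      recode_prepend 2 Fx0 [false, false] (prepend [true] ξ) rfl,
      show Fx0 [false, false] = [false] from rfl, prepend_prepend]
    rfl
  · -- [true, false]
    rw [recode_prepend 2 Fx0inv [true, false] ξ rfl,
      show Fx0inv [true, false] = [false, true] from rfl,
      recode_prepend 2 Fx0 [false, true] ξ rfl,
      show Fx0 [false, true] = [true, false] from rfl]
  · -- [true, true]
    rw [recode_prepend 2 Fx0inv [true, true] ξ rfl,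
      show Fx0inv [true, true] = [true] from rfl, ← prepend_one ξ, prepend_prepend]
    simp only [List.cons_append, List.nil_append]
    rw [recode_prepend 2 Fx0 [true, ξ 0] (shifts 1 ξ) rfl,
      show Fx0 [true, ξ 0] = [true, true, ξ 0] from rfl,
      show ([true, true, ξ 0] : List Bool) = [true, true] ++ [ξ 0] from rfl,
      ← prepend_prepend, prepend_one ξ]

/-- The Thompson generator `x₀` as a homeomorphism. -/
def x0H : Cantor ≃ₜ Cantor := recodeHomeo 2 2 Fx0 Fx0inv x0_left x0_right

theorem x0H_isRational : IsRational x0H := recodeHomeo_isRational 2 2 (by omega) _ _ _ _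

end X0


section MoveMap

theorem recode_apply (L : ℕ) (F : List Bool → List Bool) (ψ : Cantor) :
    recode L F ψ = prepend (F (prefixWord ψ L)) (shifts L ψ) := rfl

theorem prepend_append (α β : List Bool) (ζ : Cantor) :
    prepend (α ++ β) ζ = prepend α (prepend β ζ) := (prepend_prepend α β ζ).symm

theorem shifts_shifts (k l : ℕ) (ψ : Cantor) : shifts k (shifts l ψ) = shifts (k + l) ψ := by
  funext n
  simp only [shifts]
  congr 1
  omega

def Fc (γ : List Bool) : List Bool → List Bool := fun w =>
  if w.take γ.length = γ then
    match w.drop γ.length with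
    | false :: t => false :: t
    | true :: false :: t => true :: false :: (γ ++ t)
    | true :: true :: t => true :: true :: t
    | t => t
  else true :: false :: w

def Fcinv (γ : List Bool) : List Bool → List Bool := fun w =>
  match w with
  | false :: t => γ ++ false :: t
  | true :: true :: t => γ ++ true :: true :: t
  | true :: false :: t => if t = γ then γ ++ [true, false] else t
  | t => t

theorem Fc_false (γ t : List Bool) : Fc γ (γ ++ false :: t) = false :: t := by
  unfold Fc
  rw [List.take_left, if_pos rfl, List.drop_left]

theorem Fc_tf (γ t : List Bool) : Fc γ (γ ++ true :: false :: t) = true :: false :: (γ ++ t) := by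
  unfold Fc
  rw [List.take_left, if_pos rfl, List.drop_left]

theorem Fc_tt (γ t : List Bool) : Fc γ (γ ++ true :: true :: t) = true :: true :: t := by
  unfold Fc
  rw [List.take_left, if_pos rfl, List.drop_left]

theorem Fc_ne (γ w : List Bool) (h : w.take γ.length ≠ γ) :
    Fc γ w = true :: false :: w := by
  unfold Fc
  rw [if_neg h]

theorem Fcinv_f (γ t : List Bool) : Fcinv γ (false :: t) = γ ++ false :: t := rfl

theorem Fcinv_tt (γ t : List Bool) : Fcinv γ (true :: true :: t) = γ ++ true :: true :: t := rfl

theorem Fcinv_tf_eq (γ : List Bool) : Fcinv γ (true :: false :: γ) = γ ++ [true, false] := by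
  show (if γ = γ then γ ++ [true, false] else γ) = _
  rw [if_pos rfl]

theorem Fcinv_tf_ne (γ t : List Bool) (h : t ≠ γ) : Fcinv γ (true :: false :: t) = t := by
  show (if t = γ then γ ++ [true, false] else t) = _
  rw [if_neg h]

theorem c_left (γ : List Bool) (ψ : Cantor) :
    recode (γ.length + 2) (Fcinv γ) (recode (γ.length + 2) (Fc γ) ψ) = ψ := by
  set m := γ.length with hm
  set ξ := shifts (m + 2) ψ with hξ
  have hψ : ψ = prepend (prefixWord ψ (m + 2)) ξ := (prepend_prefixWord_shifts ψ (m + 2)).symm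
  by_cases hγ : prefixWord ψ m = γ
  · have hw : prefixWord ψ (m + 2) = γ ++ [ψ m, ψ (m + 1)] := by
      rw [prefixWord_split2', hγ]
    cases hb1 : ψ m with
    | false =>
      rw [recode_apply _ (Fc γ) ψ, hw, hb1, ← hξ, Fc_false]
      rw [recode_apply,
        prefixWord_prepend_ge _ _ (show (false :: [ψ (m+1)]).length ≤ m + 2 by simp),
        shifts_prepend_ge _ _ (show (false :: [ψ (m+1)]).length ≤ m + 2 by simp)]
      have hlen : m + 2 - (false :: [ψ (m+1)]).length = m := by simp
      rw [hlen]
      rw [show (false :: [ψ (m+1)]) ++ prefixWord ξ m = false :: ψ (m+1) :: prefixWord ξ m from rfl]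
      rw [Fcinv_f]
      rw [show γ ++ false :: ψ (m+1) :: prefixWord ξ m
            = (γ ++ [false, ψ (m+1)]) ++ prefixWord ξ m by simp]
      rw [prepend_append, prepend_prefixWord_shifts]
      conv_rhs => rw [hψ, hw, hb1]
    | true =>
      cases hb2 : ψ (m + 1) with
      | false =>
        have hw2 : prefixWord ψ (m + 2) = γ ++ [true, false] := by rw [hw, hb1, hb2]
        rw [recode_apply _ (Fc γ) ψ, hw2, ← hξ, Fc_tf, List.append_nil]
        rw [recode_prepend _ _ (true :: false :: γ) ξ (by simp only [List.length_cons]; try omega)]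
        rw [Fcinv_tf_eq]
        conv_rhs => rw [hψ, hw2]
      | true =>
        have hw2 : prefixWord ψ (m + 2) = γ ++ [true, true] := by rw [hw, hb1, hb2]
        rw [recode_apply _ (Fc γ) ψ, hw2, ← hξ, Fc_tt]
        rw [recode_apply,
          prefixWord_prepend_ge _ _ (show ([true, true] : List Bool).length ≤ m + 2 by simp),
          shifts_prepend_ge _ _ (show ([true, true] : List Bool).length ≤ m + 2 by simp)]
        have hlen : m + 2 - ([true, true] : List Bool).length = m := by simp
        rw [hlen]
        rw [show ([true, true] : List Bool) ++ prefixWord ξ m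
              = true :: true :: prefixWord ξ m from rfl]
        rw [Fcinv_tt]
        rw [show γ ++ true :: true :: prefixWord ξ m
              = (γ ++ [true, true]) ++ prefixWord ξ m by simp]
        rw [prepend_append, prepend_prefixWord_shifts]
        conv_rhs => rw [hψ, hw2]
  · have htake : (prefixWord ψ (m + 2)).take γ.length = prefixWord ψ m := by
      rw [← hm]; exact prefixWord_take ψ (by omega)
    rw [recode_apply _ (Fc γ) ψ, ← hξ, Fc_ne γ _ (by rw [htake]; exact hγ)]
    rw [recode_apply]
    rw [prefixWord_prepend_le _ _
      (show m + 2 ≤ (true :: false :: prefixWord ψ (m + 2)).length by simp)]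
    rw [shifts_prepend _ _
      (show m + 2 ≤ (true :: false :: prefixWord ψ (m + 2)).length by simp)]
    rw [show (true :: false :: prefixWord ψ (m + 2)).take (m + 2)
          = true :: false :: (prefixWord ψ (m + 2)).take m by
        rw [List.take_succ_cons, List.take_succ_cons]]
    rw [show (true :: false :: prefixWord ψ (m + 2)).drop (m + 2)
          = (prefixWord ψ (m + 2)).drop m by
        rw [List.drop_succ_cons, List.drop_succ_cons]]
    rw [show (prefixWord ψ (m + 2)).take m = prefixWord ψ m from prefixWord_take ψ (by omega)]
    rw [Fcinv_tf_ne γ _ hγ]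
    rw [← prepend_append]
    rw [show prefixWord ψ m ++ (prefixWord ψ (m + 2)).drop m = prefixWord ψ (m + 2) by
      conv_lhs => rw [← prefixWord_take ψ (show m ≤ m + 2 by omega)]
      exact List.take_append_drop m _]
    exact hψ.symm

theorem c_right (γ : List Bool) (ψ : Cantor) :
    recode (γ.length + 2) (Fc γ) (recode (γ.length + 2) (Fcinv γ) ψ) = ψ := by
  set m := γ.length with hm
  set ξ := shifts (m + 2) ψ with hξ
  have hψ : ψ = prepend (prefixWord ψ (m + 2)) ξ := (prepend_prefixWord_shifts ψ (m + 2)).symm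
  have hw : prefixWord ψ (m + 2) = ψ 0 :: ψ 1 :: prefixWord (shifts 2 ψ) m :=
    prefixWord_split2 ψ m
  cases hb0 : ψ 0 with
  | false =>
    rw [recode_apply _ (Fcinv γ) ψ, hw, hb0, ← hξ]
    rw [show Fcinv γ (false :: ψ 1 :: prefixWord (shifts 2 ψ) m)
          = γ ++ false :: ψ 1 :: prefixWord (shifts 2 ψ) m from rfl]
    rw [show γ ++ false :: ψ 1 :: prefixWord (shifts 2 ψ) m
          = (γ ++ [false, ψ 1]) ++ prefixWord (shifts 2 ψ) m by simp]
    rw [prepend_append]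
    rw [recode_prepend _ _ (γ ++ [false, ψ 1]) _ (by simp [hm])]
    rw [show (γ ++ [false, ψ 1] : List Bool) = γ ++ false :: [ψ 1] from rfl, Fc_false]
    rw [← prepend_append]
    conv_rhs => rw [hψ, hw, hb0]
    rfl
  | true =>
    cases hb1 : ψ 1 with
    | true =>
      rw [recode_apply _ (Fcinv γ) ψ, hw, hb0, hb1, ← hξ]
      rw [show Fcinv γ (true :: true :: prefixWord (shifts 2 ψ) m)
            = γ ++ true :: true :: prefixWord (shifts 2 ψ) m from rfl]
      rw [show γ ++ true :: true :: prefixWord (shifts 2 ψ) m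
            = (γ ++ [true, true]) ++ prefixWord (shifts 2 ψ) m by simp]
      rw [prepend_append]
      rw [recode_prepend _ _ (γ ++ [true, true]) _ (by simp [hm])]
      rw [show (γ ++ [true, true] : List Bool) = γ ++ true :: true :: [] from rfl, Fc_tt]
      rw [← prepend_append]
      conv_rhs => rw [hψ, hw, hb0, hb1]
      rfl
    | false =>
      by_cases hu : prefixWord (shifts 2 ψ) m = γ
      · rw [recode_apply _ (Fcinv γ) ψ, hw, hb0, hb1, ← hξ, hu]
        rw [Fcinv_tf_eq]
        rw [recode_prepend _ _ (γ ++ [true, false]) _ (by simp [hm])]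
        rw [show (γ ++ [true, false] : List Bool) = γ ++ true :: false :: [] from rfl, Fc_tf,
          List.append_nil]
        conv_rhs => rw [hψ, hw, hb0, hb1, hu]
      · rw [recode_apply _ (Fcinv γ) ψ, hw, hb0, hb1, ← hξ]
        rw [Fcinv_tf_ne γ _ hu]
        rw [recode_apply]
        rw [prefixWord_prepend_ge _ _ (show (prefixWord (shifts 2 ψ) m).length ≤ m + 2 by simp),
          shifts_prepend_ge _ _ (show (prefixWord (shifts 2 ψ) m).length ≤ m + 2 by simp)]
        have hlen : m + 2 - (prefixWord (shifts 2 ψ) m).length = 2 := by simp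
        rw [hlen]
        rw [Fc_ne γ _ (by
          rw [show γ.length = (prefixWord (shifts 2 ψ) m).length by simp [hm]]
          rw [List.take_left]
          exact hu)]
        rw [prefixWord_two]
        rw [show prefixWord (shifts 2 ψ) m ++ [ξ 0, ξ 1]
              = prefixWord (shifts 2 ψ) m ++ [ξ 0, ξ 1] from rfl]
        rw [show (true :: false :: (prefixWord (shifts 2 ψ) m ++ [ξ 0, ξ 1]) : List Bool)
              = (true :: false :: prefixWord (shifts 2 ψ) m) ++ [ξ 0, ξ 1] by simp]
        rw [prepend_append]
        rw [show prepend [ξ 0, ξ 1] (shifts 2 ξ) = ξ from prepend_two ξ]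
        conv_rhs => rw [hψ, hw, hb0, hb1]
  
/-- The conjugator homeomorphism mapping the complement of `I_γ` into `I_{10}`. -/
def cH (γ : List Bool) : Cantor ≃ₜ Cantor :=
  recodeHomeo (γ.length + 2) (γ.length + 2) (Fc γ) (Fcinv γ) (c_left γ) (c_right γ)

theorem cH_isRational (γ : List Bool) : IsRational (cH γ) :=
  recodeHomeo_isRational _ _ (by omega) _ _ _ _

theorem cH_maps (γ : List Bool) (ψ : Cantor) (hne : prefixWord ψ γ.length ≠ γ) :
    cH γ ψ ∈ cone [true, false] := by
  have h1 : cH γ ψ = recode (γ.length + 2) (Fc γ) ψ := rfl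
  rw [h1, recode_apply]
  rw [Fc_ne γ _ (by
    rw [show (prefixWord ψ (γ.length + 2)).take γ.length = prefixWord ψ γ.length from
      prefixWord_take ψ (by omega)]
    exact hne)]
  rw [mem_cone_iff_exists]
  refine ⟨prepend (prefixWord ψ (γ.length + 2)) (shifts (γ.length + 2) ψ), ?_⟩
  rw [prepend_prepend]
  rfl

end MoveMap


section AMap

theorem prepend_nil (ψ : Cantor) : prepend [] ψ = ψ := by
  funext n
  rw [prepend_apply_ge _ _ (by simp)]
  simp

theorem prefixWord_congr {χ ψ : Cantor} {n : ℕ} (h : ∀ i < n, χ i = ψ i) :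
    prefixWord χ n = prefixWord ψ n := by
  apply List.ext_getElem (by simp)
  intro i h1 h2
  rw [prefixWord_getElem, prefixWord_getElem]
  exact h i (by simpa using h1)

theorem prefixWord_replicate {ψ : Cantor} {k : ℕ} (hmin : ∀ i < k, ψ i = true)
    (hk : ψ k = false) :
    prefixWord ψ (k + 1) = List.replicate k true ++ [false] := by
  apply List.ext_getElem (by simp)
  intro i h1 h2
  rw [prefixWord_getElem]
  rcases lt_or_ge i k with h | h
  · rw [List.getElem_append_left (by simpa using h), List.getElem_replicate]
    exact hmin i h
  · have hik : i = k := by simp at h1; omega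
    subst hik
    rw [List.getElem_append_right (by simp), List.getElem_singleton]
    exact hk

theorem prefixWord_allTrue {ψ : Cantor} (h : ∀ i, ψ i = true) (n : ℕ) :
    prefixWord ψ n = List.replicate n true := by
  apply List.ext_getElem (by simp)
  intro i h1 h2
  rw [prefixWord_getElem, List.getElem_replicate]
  exact h i

theorem prepend_rep_lt {k i : ℕ} (hik : i < k) (θ : Cantor) :
    prepend (List.replicate k true ++ [false]) θ i = true := by
  rw [prepend_apply_lt _ _ (show i < (List.replicate k true ++ [false]).length by simp; omega)]
  rw [List.get_eq_getElem, List.getElem_append_left (by simpa using hik), List.getElem_replicate]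

theorem prepend_rep_eq (k : ℕ) (θ : Cantor) :
    prepend (List.replicate k true ++ [false]) θ k = false := by
  rw [prepend_apply_lt _ _ (show k < (List.replicate k true ++ [false]).length by simp)]
  rw [List.get_eq_getElem, List.getElem_append_right (by simp), List.getElem_singleton]

theorem mem_cone_pair {a b : Bool} {ψ : Cantor} :
    ψ ∈ cone [a, b] ↔ ψ 0 = a ∧ ψ 1 = b := by
  rw [mem_cone_iff]
  constructor
  · intro h
    constructor
    · have := congrArg (fun l => l[0]?) h
      simpa [prefixWord] using this
    · have := congrArg (fun l => l[1]?) h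
      simpa [prefixWord, List.range_succ] using this
  · rintro ⟨h0, h1⟩
    show prefixWord ψ 2 = _
    rw [prefixWord_two, h0, h1]

open Classical in
noncomputable def aFun (σ : Cantor → Cantor) (ψ : Cantor) : Cantor :=
  if h : ψ 0 = true ∧ ∃ k, ψ k = false then
    prepend (prefixWord ψ (Nat.find h.2 + 1)) (σ (shifts (Nat.find h.2 + 1) ψ))
  else ψ

theorem aFun_apply (σ : Cantor → Cantor) (ψ : Cantor) (k : ℕ) (hk1 : 1 ≤ k)
    (hmin : ∀ i < k, ψ i = true) (hk : ψ k = false) :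
    aFun σ ψ = prepend (prefixWord ψ (k + 1)) (σ (shifts (k + 1) ψ)) := by
  have h : ψ 0 = true ∧ ∃ j, ψ j = false := ⟨hmin 0 hk1, ⟨k, hk⟩⟩
  unfold aFun
  rw [dif_pos h]
  have hfind : Nat.find h.2 = k := by
    rw [Nat.find_eq_iff]
    exact ⟨hk, fun j hj => by rw [hmin j hj]; simp⟩
  rw [hfind]

theorem aFun_of_false (σ : Cantor → Cantor) (ψ : Cantor) (h0 : ψ 0 = false) :
    aFun σ ψ = ψ := by
  unfold aFun
  rw [dif_neg]
  rintro ⟨h1, -⟩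
  rw [h0] at h1
  simp at h1

theorem aFun_of_allTrue (σ : Cantor → Cantor) (ψ : Cantor) (h : ∀ k, ψ k = true) :
    aFun σ ψ = ψ := by
  unfold aFun
  rw [dif_neg]
  rintro ⟨-, k, hk⟩
  rw [h k] at hk
  simp at hk

theorem aFun_leftinv (σ σ' : Cantor → Cantor) (hinv : ∀ ζ, σ' (σ ζ) = ζ) (ψ : Cantor) :
    aFun σ' (aFun σ ψ) = ψ := by
  by_cases h : ψ 0 = true ∧ ∃ k, ψ k = false
  · set k := Nat.find h.2 with hkdef
    have hk : ψ k = false := Nat.find_spec h.2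
    have hmin : ∀ i < k, ψ i = true := by
      intro i hi
      have := Nat.find_min h.2 hi
      revert this
      cases ψ i <;> simp
    have hk1 : 1 ≤ k := by
      rcases Nat.eq_zero_or_pos k with h0 | h0
      · rw [h0] at hk; rw [h.1] at hk; exact absurd hk (by simp)
      · exact h0
    rw [aFun_apply σ ψ k hk1 hmin hk]
    set χ := prepend (prefixWord ψ (k + 1)) (σ (shifts (k + 1) ψ)) with hχ
    have hcoord : ∀ i ≤ k, χ i = ψ i := by
      intro i hi
      rw [hχ, prepend_apply_lt _ _ (show i < (prefixWord ψ (k+1)).length by simp; omega)]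
      rw [List.get_eq_getElem, prefixWord_getElem]
    rw [aFun_apply σ' χ k hk1 (fun i hi => by rw [hcoord i (le_of_lt hi)]; exact hmin i hi)
      (by rw [hcoord k le_rfl]; exact hk)]
    have hpw : prefixWord χ (k + 1) = prefixWord ψ (k + 1) :=
      prefixWord_congr (fun i hi => hcoord i (by omega))
    have hsh : shifts (k + 1) χ = σ (shifts (k + 1) ψ) := by
      rw [hχ]
      have hall := shifts_prepend_all (prefixWord ψ (k + 1)) (σ (shifts (k + 1) ψ))
      rwa [prefixWord_length] at hall
    rw [hpw, hsh, hinv, prepend_prefixWord_shifts]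
  · unfold aFun
    rw [dif_neg h, dif_neg h]

theorem continuous_aFun (σ : Cantor → Cantor) (hσ : Continuous σ) :
    Continuous (aFun σ) := by
  rw [continuous_iff_continuousAt]
  intro ψ
  by_cases h0 : ψ 0 = true
  · by_cases hex : ∃ k, ψ k = false
    · set k := Nat.find hex with hkdef
      have hk : ψ k = false := Nat.find_spec hex
      have hmin : ∀ i < k, ψ i = true := by
        intro i hi
        have := Nat.find_min hex hi
        revert this
        cases ψ i <;> simp
      have hk1 : 1 ≤ k := by
        rcases Nat.eq_zero_or_pos k with hz | hp
        · rw [hz] at hk; rw [h0] at hk; exact absurd hk (by simp)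
        · exact hp
      have hcont : Continuous (fun χ => prepend (prefixWord ψ (k + 1))
          (σ (shifts (k + 1) χ))) :=
        (continuous_prepend _).comp (hσ.comp (continuous_shifts _))
      apply hcont.continuousAt.congr
      apply Filter.eventuallyEq_of_mem
        (((isClopen_cone (prefixWord ψ (k+1))).isOpen).mem_nhds (self_mem_cone_prefixWord ψ (k+1)))
      intro χ hχ
      have hco : ∀ i < k + 1, χ i = ψ i := (mem_cone_prefixWord χ ψ (k+1)).1 hχ
      rw [aFun_apply σ χ k hk1 (fun i hi => by rw [hco i (by omega)]; exact hmin i hi)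
        (by rw [hco k (by omega)]; exact hk)]
      rw [prefixWord_congr hco]
    · -- all true case
      have hall : ∀ i, ψ i = true := by
        intro i
        by_contra hc
        exact hex ⟨i, by revert hc; cases ψ i <;> simp⟩
      rw [ContinuousAt, aFun_of_allTrue σ ψ hall, tendsto_pi_nhds]
      intro i
      have hev : ∀ᶠ χ in nhds ψ, (fun χ => aFun σ χ i) χ = true := by
        apply Filter.eventually_of_mem
          (((isClopen_cone (prefixWord ψ (i+1))).isOpen).mem_nhds
            (self_mem_cone_prefixWord ψ (i+1)))
        intro χ hχ
        have hco : ∀ j < i + 1, χ j = ψ j := (mem_cone_prefixWord χ ψ (i+1)).1 hχ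
        by_cases hc : χ 0 = true ∧ ∃ m, χ m = false
        · have hfindge : i + 1 ≤ Nat.find hc.2 := by
            by_contra hlt
            push_neg at hlt
            have hspec := Nat.find_spec hc.2
            rw [hco _ hlt, hall _] at hspec
            simp at hspec
          show aFun σ χ i = true
          unfold aFun
          rw [dif_pos hc]
          rw [prepend_apply_lt _ _ (show i < (prefixWord χ (Nat.find hc.2 + 1)).length by
            rw [prefixWord_length]; omega)]
          rw [List.get_eq_getElem, prefixWord_getElem, hco i (by omega), hall i]
        · show aFun σ χ i = true
          unfold aFun
          rw [dif_neg hc, hco i (by omega), hall i]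
      rw [hall i]
      have hev' : (fun χ => aFun σ χ i) =ᶠ[nhds ψ] fun _ => true := hev
      exact Filter.Tendsto.congr' hev'.symm tendsto_const_nhds
  · -- ψ 0 = false
    have h0f : ψ 0 = false := by revert h0; cases ψ 0 <;> simp
    apply continuous_id.continuousAt.congr
    apply Filter.eventuallyEq_of_mem
      (((isClopen_cone (prefixWord ψ 1)).isOpen).mem_nhds (self_mem_cone_prefixWord ψ 1))
    intro χ hχ
    have hco : χ 0 = ψ 0 := (mem_cone_prefixWord χ ψ 1).1 hχ 0 (by omega)
    show id χ = aFun σ χ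
    exact (aFun_of_false σ χ (by rw [hco]; exact h0f)).symm

/-- The swindle homeomorphism. -/
noncomputable def aH (σ σ' : Cantor → Cantor) (hσ : Continuous σ) (hσ' : Continuous σ')
    (h1 : ∀ ζ, σ' (σ ζ) = ζ) (h2 : ∀ ζ, σ (σ' ζ) = ζ) : Cantor ≃ₜ Cantor where
  toFun := aFun σ
  invFun := aFun σ'
  left_inv := aFun_leftinv σ σ' h1
  right_inv := aFun_leftinv σ' σ h2
  continuous_toFun := continuous_aFun σ hσ
  continuous_invFun := continuous_aFun σ' hσ'

end AMap


section Swindle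

theorem prefixWord_prepend_len (α : List Bool) (ψ : Cantor) {n : ℕ} (h : α.length = n) :
    prefixWord (prepend α ψ) n = α := by
  subst h
  exact prefixWord_prepend α ψ

theorem shifts_prepend_all_len (α : List Bool) (ψ : Cantor) {n : ℕ} (h : α.length = n) :
    shifts n (prepend α ψ) = ψ := by
  subst h
  exact shifts_prepend_all α ψ

theorem recode_prepend_long (L : ℕ) (F : List Bool → List Bool) (w : List Bool) (θ : Cantor)
    (h : L ≤ w.length) :
    recode L F (prepend w θ) = prepend (F (w.take L)) (prepend (w.drop L) θ) := by
  rw [recode_apply, prefixWord_prepend_le _ _ h, shifts_prepend _ _ h]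

theorem x0_ones (i : ℕ) (θ : Cantor) :
    recode 2 Fx0 (prepend (List.replicate (i + 1) true ++ [false]) θ)
      = prepend (List.replicate (i + 2) true ++ [false]) θ := by
  cases i with
  | zero =>
    rw [show List.replicate 1 true ++ [false] = [true, false] from rfl,
      recode_prepend 2 Fx0 [true, false] θ rfl,
      show Fx0 [true, false] = [true, true, false] from rfl,
      show List.replicate 2 true ++ [false] = [true, true, false] from rfl]
  | succ i' =>
    have hw : List.replicate (i' + 1 + 1) true ++ [false]
        = true :: true :: (List.replicate i' true ++ [false]) := by
      simp [List.replicate_succ]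
    rw [hw, recode_prepend_long 2 Fx0 _ θ (by simp)]
    rw [show (true :: true :: (List.replicate i' true ++ [false])).take 2 = [true, true] from rfl]
    rw [show (true :: true :: (List.replicate i' true ++ [false])).drop 2
          = List.replicate i' true ++ [false] from rfl]
    rw [show Fx0 [true, true] = [true, true, true] from rfl]
    rw [← prepend_append]
    have hl : ([true, true, true] : List Bool) ++ (List.replicate i' true ++ [false])
        = List.replicate (i' + 1 + 2) true ++ [false] := by
      rw [show i' + 1 + 2 = 3 + i' from by omega, List.replicate_add, List.append_assoc]
      rfl
    rw [hl]

theorem x0inv_ones (i : ℕ) (θ : Cantor) :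
    recode 2 Fx0inv (prepend (List.replicate (i + 2) true ++ [false]) θ)
      = prepend (List.replicate (i + 1) true ++ [false]) θ := by
  have hw : List.replicate (i + 2) true ++ [false]
      = true :: true :: (List.replicate i true ++ [false]) := by
    simp [List.replicate_succ]
  rw [hw, recode_prepend_long 2 Fx0inv _ θ (by simp)]
  rw [show (true :: true :: (List.replicate i true ++ [false])).take 2 = [true, true] from rfl]
  rw [show (true :: true :: (List.replicate i true ++ [false])).drop 2
        = List.replicate i true ++ [false] from rfl]
  rw [show Fx0inv [true, true] = [true] from rfl]
  rw [← prepend_append]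
  have hl : ([true] : List Bool) ++ (List.replicate i true ++ [false])
      = List.replicate (i + 1) true ++ [false] := by
    rw [show i + 1 = 1 + i from by omega, List.replicate_add, List.append_assoc]
    rfl
  rw [hl]

/-- The local action of `s'` on the cone `I₁₀`. -/
def σof (s' : Cantor → Cantor) : Cantor → Cantor :=
  fun ζ => shifts 2 (s' (prepend [true, false] ζ))

theorem continuous_σof (s' : Cantor → Cantor) (h : Continuous s') : Continuous (σof s') :=
  (continuous_shifts 2).comp (h.comp (continuous_prepend _))

theorem s'_cone (s' : Cantor ≃ₜ Cantor) (hsupp : ∀ ψ ∉ cone [true, false], s' ψ = ψ)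
    (ζ : Cantor) : s' (prepend [true, false] ζ) = prepend [true, false] (σof ⇑s' ζ) := by
  have hmem : s' (prepend [true, false] ζ) ∈ cone [true, false] := by
    by_contra hc
    have h1 : s' (s' (prepend [true, false] ζ)) = s' (prepend [true, false] ζ) := hsupp _ hc
    have h2 : s' (prepend [true, false] ζ) = prepend [true, false] ζ :=
      s'.toEquiv.injective h1
    rw [h2] at hc
    exact hc (prepend_mem_cone _ _)
  obtain ⟨ξ, hξ⟩ := (mem_cone_iff_exists _ _).1 hmem
  rw [show σof ⇑s' ζ = shifts 2 (s' (prepend [true, false] ζ)) from rfl, hξ]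
  rw [shifts_prepend_all_len [true, false] ξ (n := 2) rfl]

theorem hsupp_symm (s' : Cantor ≃ₜ Cantor) (hsupp : ∀ ψ ∉ cone [true, false], s' ψ = ψ) :
    ∀ ψ ∉ cone [true, false], s'.symm ψ = ψ := by
  intro ψ hψ
  have h := congrArg s'.symm (hsupp ψ hψ)
  rw [s'.symm_apply_apply] at h
  exact h.symm

theorem σof_inv₁ (s' : Cantor ≃ₜ Cantor) (hsupp : ∀ ψ ∉ cone [true, false], s' ψ = ψ)
    (ζ : Cantor) : σof ⇑s'.symm (σof ⇑s' ζ) = ζ := by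
  show shifts 2 (s'.symm (prepend [true, false] (σof ⇑s' ζ))) = ζ
  rw [← s'_cone s' hsupp ζ, s'.symm_apply_apply]
  exact shifts_prepend_all_len _ _ rfl

theorem σof_inv₂ (s' : Cantor ≃ₜ Cantor) (hsupp : ∀ ψ ∉ cone [true, false], s' ψ = ψ)
    (ζ : Cantor) : σof ⇑s' (σof ⇑s'.symm ζ) = ζ := by
  show shifts 2 (s' (prepend [true, false] (σof ⇑s'.symm ζ))) = ζ
  rw [← s'_cone s'.symm (hsupp_symm s' hsupp) ζ, s'.apply_symm_apply]
  exact shifts_prepend_all_len _ _ rfl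

theorem swindle_eq (s' : Cantor ≃ₜ Cantor) (hsupp : ∀ ψ ∉ cone [true, false], s' ψ = ψ)
    (ψ : Cantor) :
    aFun (σof ⇑s') (recode 2 Fx0 (aFun (σof ⇑s'.symm) (recode 2 Fx0inv ψ))) = s' ψ := by
  have hψ2 := (prepend_two ψ).symm
  cases h0 : ψ 0 with
  | false =>
    rw [h0] at hψ2
    have e1 : recode 2 Fx0inv ψ = prepend [false, false, ψ 1] (shifts 2 ψ) := by
      conv_lhs => rw [hψ2]
      rw [recode_prepend 2 Fx0inv [false, ψ 1] _ rfl]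
      rw [show Fx0inv [false, ψ 1] = [false, false, ψ 1] from rfl]
    have e2 : aFun (σof ⇑s'.symm) (prepend [false, false, ψ 1] (shifts 2 ψ))
        = prepend [false, false, ψ 1] (shifts 2 ψ) :=
      aFun_of_false _ _ (by rw [prepend_apply_lt _ _ (by simp)]; rfl)
    have e3 : recode 2 Fx0 (prepend [false, false, ψ 1] (shifts 2 ψ)) = ψ := by
      rw [show ([false, false, ψ 1] : List Bool) = [false, false] ++ [ψ 1] from rfl,
        prepend_append, recode_prepend 2 Fx0 [false, false] _ rfl,
        show Fx0 [false, false] = [false] from rfl, ← prepend_append]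
      show prepend [false, ψ 1] (shifts 2 ψ) = ψ
      exact hψ2.symm
    rw [e1, e2, e3, aFun_of_false _ _ h0]
    exact (hsupp ψ (fun hc => by rw [(mem_cone_pair.1 hc).1] at h0; simp at h0)).symm
  | true =>
    cases h1 : ψ 1 with
    | false =>
      rw [h0, h1] at hψ2
      have e1 : recode 2 Fx0inv ψ = prepend [false, true] (shifts 2 ψ) := by
        conv_lhs => rw [hψ2]
        rw [recode_prepend 2 Fx0inv [true, false] _ rfl]
        rw [show Fx0inv [true, false] = [false, true] from rfl]
      have e2 : aFun (σof ⇑s'.symm) (prepend [false, true] (shifts 2 ψ))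
          = prepend [false, true] (shifts 2 ψ) :=
        aFun_of_false _ _ (by rw [prepend_apply_lt _ _ (by simp)]; rfl)
      have e3 : recode 2 Fx0 (prepend [false, true] (shifts 2 ψ)) = ψ := by
        rw [recode_prepend 2 Fx0 [false, true] _ rfl]
        exact hψ2.symm
      rw [e1, e2, e3]
      have hmin1 : ∀ i < 1, ψ i = true := by
        intro i hi
        have hz : i = 0 := by omega
        subst hz
        exact h0
      rw [aFun_apply _ ψ 1 le_rfl hmin1 h1]
      rw [prefixWord_two, h0, h1]
      conv_rhs => rw [hψ2]
      exact (s'_cone s' hsupp (shifts 2 ψ)).symm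
    | true =>
      by_cases hex : ∃ k, ψ k = false
      · have hk := Nat.find_spec hex
        have hmin : ∀ i < Nat.find hex, ψ i = true := by
          intro i hi
          have h := Nat.find_min hex hi
          revert h
          cases ψ i <;> simp
        obtain ⟨j, hj⟩ : ∃ j, Nat.find hex = j + 2 := by
          have hf0 : Nat.find hex ≠ 0 := fun hc => by rw [hc, h0] at hk; simp at hk
          have hf1 : Nat.find hex ≠ 1 := fun hc => by rw [hc, h1] at hk; simp at hk
          exact ⟨Nat.find hex - 2, by omega⟩
        rw [hj] at hk hmin
        have hpw : prefixWord ψ (j + 3) = List.replicate (j + 2) true ++ [false] := by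
          rw [show j + 3 = (j + 2) + 1 from by omega]
          exact prefixWord_replicate hmin hk
        have hψk : ψ = prepend (List.replicate (j + 2) true ++ [false]) (shifts (j + 3) ψ) := by
          conv_lhs => rw [← prepend_prefixWord_shifts ψ (j + 3)]
          rw [hpw]
        have e1 : recode 2 Fx0inv ψ
            = prepend (List.replicate (j + 1) true ++ [false]) (shifts (j + 3) ψ) := by
          conv_lhs => rw [hψk]
          exact x0inv_ones j _
        have e2 : aFun (σof ⇑s'.symm)
              (prepend (List.replicate (j + 1) true ++ [false]) (shifts (j + 3) ψ))
            = prepend (List.replicate (j + 1) true ++ [false])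
                (σof ⇑s'.symm (shifts (j + 3) ψ)) := by
          rw [aFun_apply _ _ (j + 1) (by omega)
            (fun i hi => prepend_rep_lt hi _) (prepend_rep_eq _ _)]
          rw [prefixWord_prepend_len _ _ (by simp), shifts_prepend_all_len _ _ (by simp)]
        have e3 := x0_ones j (σof ⇑s'.symm (shifts (j + 3) ψ))
        have e4 : aFun (σof ⇑s')
              (prepend (List.replicate (j + 2) true ++ [false])
                (σof ⇑s'.symm (shifts (j + 3) ψ)))
            = prepend (List.replicate (j + 2) true ++ [false])
                (σof ⇑s' (σof ⇑s'.symm (shifts (j + 3) ψ))) := by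
          rw [aFun_apply _ _ (j + 2) (by omega)
            (fun i hi => prepend_rep_lt hi _) (prepend_rep_eq _ _)]
          rw [prefixWord_prepend_len _ _ (by simp), shifts_prepend_all_len _ _ (by simp)]
        rw [e1, e2, e3, e4, σof_inv₂ s' hsupp]
        rw [hsupp ψ (fun hc => by rw [(mem_cone_pair.1 hc).2] at h1; simp at h1)]
        exact hψk.symm
      · have hall : ∀ i, ψ i = true := by
          intro i
          by_contra hc
          exact hex ⟨i, by revert hc; cases ψ i <;> simp⟩
        rw [h0, h1] at hψ2
        have e1 : recode 2 Fx0inv ψ = prepend [true] (shifts 2 ψ) := by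
          conv_lhs => rw [hψ2]
          rw [recode_prepend 2 Fx0inv [true, true] _ rfl]
          rw [show Fx0inv [true, true] = [true] from rfl]
        have hχall : ∀ i, prepend [true] (shifts 2 ψ) i = true := by
          intro i
          cases i with
          | zero => rw [prepend_apply_lt _ _ (by simp)]; rfl
          | succ n => rw [prepend_apply_ge _ _ (by simp)]; exact hall _
        have e2 := aFun_of_allTrue (σof ⇑s'.symm) _ hχall
        have e3 : recode 2 Fx0 (prepend [true] (shifts 2 ψ))
            = prepend [true, true, shifts 2 ψ 0] (shifts 1 (shifts 2 ψ)) := by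
          conv_lhs => rw [← prepend_one (shifts 2 ψ), prepend_prepend]
          simp only [List.cons_append, List.nil_append]
          rw [recode_prepend 2 Fx0 [true, shifts 2 ψ 0] _ rfl]
          rw [show Fx0 [true, shifts 2 ψ 0] = [true, true, shifts 2 ψ 0] from rfl]
        have hχ2all : ∀ i, prepend [true, true, shifts 2 ψ 0] (shifts 1 (shifts 2 ψ)) i
            = true := by
          intro i
          rcases i with _ | _ | _ | n
          · rw [prepend_apply_lt _ _ (by simp)]; rfl
          · rw [prepend_apply_lt _ _ (by simp)]; rfl
          · rw [prepend_apply_lt _ _ (by simp)]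
            exact hall 2
          · rw [prepend_apply_ge _ _ (by simp)]
            exact hall (n + 1 + 2)
        have e4 := aFun_of_allTrue (σof ⇑s') _ hχ2all
        rw [e1, e2, e3, e4]
        rw [hsupp ψ (fun hc => by rw [(mem_cone_pair.1 hc).2] at h1; simp at h1)]
        funext i
        rw [hχ2all i, hall i]

end Swindle


section ATrans

/-- Transducer for the swindle map `aFun (σof s')`, built from a transducer for `s'`. -/
def aT (n : ℕ) (T : Transducer (Fin n)) : Transducer (Fin 3 ⊕ (Fin 3 × Fin n)) where
  s0 := Sum.inl 0
  t := fun s b => match s with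
    | Sum.inl i =>
        if i = 0 then (if b then Sum.inl 1 else Sum.inl 2)
        else if i = 1 then
          (if b then Sum.inl 1
           else Sum.inr (⟨2 - (T.oStar T.s0 [true, false]).length,
              Nat.lt_succ_of_le (Nat.sub_le _ _)⟩, T.tStar T.s0 [true, false]))
        else Sum.inl 2
    | Sum.inr (j, s) =>
        Sum.inr (⟨(j : ℕ) - (T.o s b).length,
          Nat.lt_of_le_of_lt (Nat.sub_le _ _) j.isLt⟩, T.t s b)
  o := fun s b => match s with
    | Sum.inl i =>
        if i = 0 then [b]
        else if i = 1 then
          (if b then [true] else false :: (T.oStar T.s0 [true, false]).drop 2)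
        else [b]
    | Sum.inr (j, s) => (T.o s b).drop (j : ℕ)

theorem aT_inr_oStar (n : ℕ) (T : Transducer (Fin n)) (w : List Bool) :
    ∀ (j : Fin 3) (s : Fin n),
      (aT n T).oStar (Sum.inr (j, s)) w = (T.oStar s w).drop (j : ℕ) := by
  induction w with
  | nil => intro j s; simp
  | cons b w ih =>
    intro j s
    rw [Transducer.oStar_cons,
      show (aT n T).t (Sum.inr (j, s)) b = Sum.inr (⟨(j : ℕ) - (T.o s b).length,
        Nat.lt_of_le_of_lt (Nat.sub_le _ _) j.isLt⟩, T.t s b) from rfl,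
      show (aT n T).o (Sum.inr (j, s)) b = (T.o s b).drop (j : ℕ) from rfl,
      ih, Transducer.oStar_cons, List.drop_append]

theorem aT_inl1_run (n : ℕ) (T : Transducer (Fin n)) (r : ℕ) :
    (aT n T).tStar (Sum.inl 1) (List.replicate r true) = Sum.inl 1 ∧
    (aT n T).oStar (Sum.inl 1) (List.replicate r true) = List.replicate r true := by
  induction r with
  | zero => exact ⟨rfl, rfl⟩
  | succ r ih =>
    rw [List.replicate_succ]
    constructor
    · rw [Transducer.tStar_cons, show (aT n T).t (Sum.inl 1) true = Sum.inl 1 from rfl]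
      exact ih.1
    · rw [Transducer.oStar_cons, show (aT n T).t (Sum.inl 1) true = Sum.inl 1 from rfl,
        show (aT n T).o (Sum.inl 1) true = [true] from rfl, ih.2]
      rfl

theorem aT_inl2_run (n : ℕ) (T : Transducer (Fin n)) (w : List Bool) :
    (aT n T).tStar (Sum.inl 2) w = Sum.inl 2 ∧
    (aT n T).oStar (Sum.inl 2) w = w := by
  induction w with
  | nil => exact ⟨rfl, rfl⟩
  | cons b w ih =>
    constructor
    · rw [Transducer.tStar_cons, show (aT n T).t (Sum.inl 2) b = Sum.inl 2 from rfl]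
      exact ih.1
    · rw [Transducer.oStar_cons, show (aT n T).t (Sum.inl 2) b = Sum.inl 2 from rfl,
        show (aT n T).o (Sum.inl 2) b = [b] from rfl, ih.2]
      rfl

theorem aT_start_ones (n : ℕ) (T : Transducer (Fin n)) (k : ℕ) (hk : 1 ≤ k) :
    (aT n T).tStar (aT n T).s0 (List.replicate k true) = Sum.inl 1 ∧
    (aT n T).oStar (aT n T).s0 (List.replicate k true) = List.replicate k true := by
  obtain ⟨k', rfl⟩ : ∃ k', k = k' + 1 := ⟨k - 1, by omega⟩
  rw [List.replicate_succ]
  constructor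
  · rw [Transducer.tStar_cons, show (aT n T).t ((aT n T).s0) true = Sum.inl 1 from rfl]
    exact (aT_inl1_run n T k').1
  · rw [Transducer.oStar_cons, show (aT n T).t ((aT n T).s0) true = Sum.inl 1 from rfl,
      show (aT n T).o ((aT n T).s0) true = [true] from rfl, (aT_inl1_run n T k').2]
    rfl

theorem aT_computes (n : ℕ) (T : Transducer (Fin n)) (s' : Cantor ≃ₜ Cantor)
    (hs : T.Computes ⇑s') (hsupp : ∀ ψ ∉ cone [true, false], s' ψ = ψ) :
    (aT n T).Computes (aFun (σof ⇑s')) := by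
  intro ψ
  cases h0 : ψ 0 with
  | false =>
    have haψ : aFun (σof ⇑s') ψ = ψ := aFun_of_false _ _ h0
    have hrun : ∀ m, (aT n T).oStar (aT n T).s0 (prefixWord ψ m) = prefixWord ψ m := by
      intro m
      cases m with
      | zero => rfl
      | succ m =>
        rw [show m + 1 = 1 + m from by omega, prefixWord_add, Transducer.oStar_append,
          prefixWord_one, h0,
          show (aT n T).oStar ((aT n T).s0) [false] = [false] from rfl,
          show (aT n T).tStar ((aT n T).s0) [false] = Sum.inl 2 from rfl,
          (aT_inl2_run n T _).2]
    rw [haψ]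
    constructor
    · intro m
      rw [hrun m]
      exact isPrefixOf_prefixWord ψ m
    · intro K
      exact ⟨K, by rw [hrun K]; simp⟩
  | true =>
    by_cases hex : ∃ k, ψ k = false
    · have hk := Nat.find_spec hex
      have hmin : ∀ i < Nat.find hex, ψ i = true := by
        intro i hi
        have h := Nat.find_min hex hi
        revert h
        cases ψ i <;> simp
      set k := Nat.find hex with hkdef
      have hk1 : 1 ≤ k := by
        rcases Nat.eq_zero_or_pos k with hz | hp
        · rw [hz, h0] at hk; simp at hk
        · exact hp
      set ζ := shifts (k + 1) ψ with hζ
      have hpw1 : prefixWord ψ (k + 1) = List.replicate k true ++ [false] :=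
        prefixWord_replicate hmin hk
      have haψ : aFun (σof ⇑s') ψ
          = prepend (List.replicate k true ++ [false]) (σof ⇑s' ζ) := by
        rw [aFun_apply _ ψ k hk1 hmin hk, hpw1]
      -- prefix words of ψ below k are all-true
      have hpwm : ∀ m ≤ k, prefixWord ψ m = List.replicate m true := by
        intro m hm
        apply List.ext_getElem (by simp)
        intro i h1 h2
        rw [prefixWord_getElem, List.getElem_replicate]
        exact hmin i (by simp at h1; omega)
      -- the key run computation
      have hkey : ∀ r, (aT n T).oStar (aT n T).s0 (prefixWord ψ (k + 1 + r))
          = (List.replicate k true ++ [false])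
            ++ ((T.oStar T.s0 (prefixWord (prepend [true, false] ζ) (r + 2))).drop 2) := by
        intro r
        have hsplit : prefixWord ψ (k + 1 + r)
            = List.replicate k true ++ (false :: prefixWord ζ r) := by
          rw [prefixWord_add, hpw1, List.append_assoc, List.singleton_append, ← hζ]
        rw [hsplit, Transducer.oStar_append, (aT_start_ones n T k hk1).2,
          (aT_start_ones n T k hk1).1, Transducer.oStar_cons]
        rw [show (aT n T).t (Sum.inl 1) false
            = Sum.inr (⟨2 - (T.oStar T.s0 [true, false]).length,
                Nat.lt_succ_of_le (Nat.sub_le _ _)⟩, T.tStar T.s0 [true, false]) from rfl]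
        rw [show (aT n T).o (Sum.inl 1) false
            = false :: (T.oStar T.s0 [true, false]).drop 2 from rfl]
        rw [aT_inr_oStar]
        have hpwp : prefixWord (prepend [true, false] ζ) (r + 2)
            = [true, false] ++ prefixWord ζ r := by
          rw [prefixWord_prepend_ge _ _ (by simp)]
          congr 2
        rw [hpwp, Transducer.oStar_append, List.drop_append]
        rw [List.append_assoc]
        rfl
      constructor
      · intro m
        rcases le_or_gt m k with hm | hm
        · rw [(hpwm m hm) ]
          rcases Nat.eq_zero_or_pos m with hz | hpz
          · subst hz
            intro i hi
            simp at hi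
          · rw [(aT_start_ones n T m hpz).2]
            intro i hi
            simp only [List.length_replicate] at hi
            rw [List.get_eq_getElem, List.getElem_replicate, haψ]
            exact (prepend_rep_lt (by omega) _).symm
        · obtain ⟨r, rfl⟩ : ∃ r, m = k + 1 + r := ⟨m - (k + 1), by omega⟩
          rw [hkey r, haψ]
          apply IsPrefixOf.append
          have hp := (hs (prepend [true, false] ζ)).1 (r + 2)
          rw [s'_cone s' hsupp ζ] at hp
          have hd := hp.dropPrefix 2
          rw [shifts_prepend_all_len [true, false] _ (n := 2) rfl] at hd
          exact hd
      · intro K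
        obtain ⟨r, hr⟩ := (hs (prepend [true, false] ζ)).2 (K + 2)
        refine ⟨k + 1 + r, ?_⟩
        rw [hkey r]
        have hmono := T.oStar_length_mono T.s0 (prepend [true, false] ζ)
          (show r ≤ r + 2 by omega)
        rw [List.length_append, List.length_drop]
        have : K + 2 ≤ (T.oStar T.s0 (prefixWord (prepend [true, false] ζ) (r + 2))).length :=
          le_trans hr hmono
        omega
    · have hall : ∀ i, ψ i = true := by
        intro i
        by_contra hc
        exact hex ⟨i, by revert hc; cases ψ i <;> simp⟩
      have haψ : aFun (σof ⇑s') ψ = ψ := aFun_of_allTrue _ _ hall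
      have hrun : ∀ m, (aT n T).oStar (aT n T).s0 (prefixWord ψ m)
          = List.replicate m true := by
        intro m
        rw [prefixWord_allTrue hall]
        rcases Nat.eq_zero_or_pos m with hz | hp
        · subst hz; rfl
        · exact (aT_start_ones n T m hp).2
      rw [haψ]
      constructor
      · intro m
        rw [hrun m]
        intro i hi
        simp only [List.length_replicate] at hi
        rw [List.get_eq_getElem, List.getElem_replicate]
        exact (hall i).symm
      · intro K
        exact ⟨K, by rw [hrun K]; simp⟩

end ATrans


section Piece

theorem Transducer.pad_computes {n M : ℕ} (T : Transducer (Fin n)) (h : n ≤ M)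
    {f : Cantor → Cantor} (hc : T.Computes f) : (T.pad h).Computes f := by
  intro ψ
  have h0 : (T.pad h).s0 = Fin.castLE h T.s0 := rfl
  constructor
  · intro m
    rw [h0, Transducer.pad_oStar]
    exact (hc ψ).1 m
  · intro k
    obtain ⟨m, hm⟩ := (hc ψ).2 k
    exact ⟨m, by rw [h0, Transducer.pad_oStar]; exact hm⟩

theorem copyT_computes_id : copyT.Computes (fun ψ => ψ) := by
  intro ψ
  constructor
  · intro m
    rw [copyT_oStar]
    exact isPrefixOf_prefixWord ψ m
  · intro k
    exact ⟨k, by rw [copyT_oStar]; simp⟩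

/-- Rationality from a uniform cone-decomposition into computable pieces. -/
theorem isRational_of_locally (h : Cantor ≃ₜ Cantor) (N : ℕ) (hN : 0 < N) (K : ℕ)
    (Tsel : List Bool → Transducer (Fin K))
    (rsel : List Bool → Cantor → Cantor)
    (hcomp : ∀ γ : List Bool, γ.length = N → (Tsel γ).Computes (rsel γ))
    (hagree : ∀ γ : List Bool, γ.length = N → ∀ ξ, h (prepend γ ξ) = rsel γ (prepend γ ξ)) :
    IsRational h := by
  apply isRational_of_computes (glueT N K hN Tsel
    (fun γ => (Tsel γ).tStar (Tsel γ).s0 γ) (fun γ => (Tsel γ).oStar (Tsel γ).s0 γ))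
  apply glueT_computes
  intro γ hγ ξ
  have hkey : ∀ j, (Tsel γ).oStar (Tsel γ).s0 γ
      ++ (Tsel γ).oStar ((Tsel γ).tStar (Tsel γ).s0 γ) (prefixWord ξ j)
      = (Tsel γ).oStar (Tsel γ).s0 (prefixWord (prepend γ ξ) (γ.length + j)) := by
    intro j
    rw [prefixWord_prepend_ge _ _ (by omega), Nat.add_sub_cancel_left,
      Transducer.oStar_append]
  constructor
  · intro j
    rw [hkey j, hagree γ hγ ξ]
    exact (hcomp γ hγ (prepend γ ξ)).1 _
  · intro k
    obtain ⟨j, hj⟩ := (hcomp γ hγ (prepend γ ξ)).2 k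
    refine ⟨j, ?_⟩
    rw [hkey j]
    exact le_trans hj ((Tsel γ).oStar_length_mono _ _ (show j ≤ γ.length + j by omega))

theorem isClopen_image (f : Cantor ≃ₜ Cantor) {E : Set Cantor} (hE : IsClopen E) :
    IsClopen (⇑f '' E) := by
  rw [show ⇑f '' E = ⇑f.symm ⁻¹' E from f.image_eq_preimage_symm E]
  exact hE.preimage f.symm.continuous

open Classical in
/-- The piecewise map: `f` on `E`, `f⁻¹` on `f(E)`, identity elsewhere. -/
noncomputable def pieceFun (f : Cantor ≃ₜ Cantor) (E : Set Cantor) : Cantor → Cantor :=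
  fun ψ => if ψ ∈ E then f ψ else if ψ ∈ ⇑f '' E then f.symm ψ else ψ

theorem pieceFun_invol (f : Cantor ≃ₜ Cantor) (E : Set Cantor)
    (hdisj : ∀ x ∈ E, x ∉ ⇑f '' E) (ψ : Cantor) :
    pieceFun f E (pieceFun f E ψ) = ψ := by
  unfold pieceFun
  by_cases h1 : ψ ∈ E
  · rw [if_pos h1]
    have h2 : f ψ ∈ ⇑f '' E := ⟨ψ, h1, rfl⟩
    have h3 : f ψ ∉ E := fun hc => hdisj _ hc h2
    rw [if_neg h3, if_pos h2, f.symm_apply_apply]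
  · rw [if_neg h1]
    by_cases h2 : ψ ∈ ⇑f '' E
    · rw [if_pos h2]
      obtain ⟨χ, hχE, hχ⟩ := h2
      have h3 : f.symm ψ ∈ E := by rw [← hχ, f.symm_apply_apply]; exact hχE
      rw [if_pos h3, f.apply_symm_apply]
    · rw [if_neg h2, if_neg h1, if_neg h2]

theorem continuous_pieceFun (f : Cantor ≃ₜ Cantor) (E : Set Cantor) (hE : IsClopen E) :
    Continuous (pieceFun f E) := by
  apply continuous_of_locally
  intro x
  by_cases h1 : x ∈ E
  · refine ⟨E, hE.isOpen, h1, ⇑f, f.continuous, ?_⟩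
    intro y hy
    unfold pieceFun
    rw [if_pos hy]
  · by_cases h2 : x ∈ ⇑f '' E
    · refine ⟨(⇑f '' E) ∩ Eᶜ, ((isClopen_image f hE).isOpen).inter hE.compl.isOpen,
        ⟨h2, h1⟩, ⇑f.symm, f.symm.continuous, ?_⟩
      rintro y ⟨hy2, hy1⟩
      unfold pieceFun
      rw [if_neg hy1, if_pos hy2]
    · refine ⟨(E ∪ ⇑f '' E)ᶜ, (hE.union (isClopen_image f hE)).compl.isOpen,
        (by simp [h1, h2]), id, continuous_id, ?_⟩
      intro y hy
      simp only [Set.mem_compl_iff, Set.mem_union] at hy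
      push_neg at hy
      unfold pieceFun
      rw [if_neg hy.1, if_neg hy.2]
      rfl

/-- The piecewise homeomorphism. -/
noncomputable def pieceHomeo (f : Cantor ≃ₜ Cantor) (E : Set Cantor) (hE : IsClopen E)
    (hdisj : ∀ x ∈ E, x ∉ ⇑f '' E) : Cantor ≃ₜ Cantor where
  toFun := pieceFun f E
  invFun := pieceFun f E
  left_inv := pieceFun_invol f E hdisj
  right_inv := pieceFun_invol f E hdisj
  continuous_toFun := continuous_pieceFun f E hE
  continuous_invFun := continuous_pieceFun f E hE

/-- A set is `N`-saturated if it is a union of cones of length `N`. -/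
def Saturated (C : Set Cantor) (N : ℕ) : Prop := ∀ ψ ∈ C, cone (prefixWord ψ N) ⊆ C

theorem saturated_mono {C : Set Cantor} {N N' : ℕ} (h : Saturated C N) (hNN : N ≤ N') :
    Saturated C N' := fun ψ hψ => le_trans (cone_prefixWord_mono ψ hNN) (h ψ hψ)

theorem mem_cone_pw_comm {χ ψ : Cantor} {N : ℕ} (h : χ ∈ cone (prefixWord ψ N)) :
    prefixWord χ N = prefixWord ψ N := by
  have := (mem_cone_iff _ χ).1 h
  simpa using this

theorem saturated_compl_mem {C D : Set Cantor} {N : ℕ} (hC : Saturated C N)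
    (hD : Saturated D N) {ψ : Cantor} (hψ : ψ ∉ C ∪ D) :
    cone (prefixWord ψ N) ⊆ (C ∪ D)ᶜ := by
  intro χ hχ
  have hpw := mem_cone_pw_comm hχ
  intro hmem
  have hψχ : ψ ∈ cone (prefixWord χ N) := by
    rw [hpw]
    exact self_mem_cone_prefixWord ψ N
  rcases hmem with hc | hd
  · exact hψ (Or.inl (hC χ hc hψχ))
  · exact hψ (Or.inr (hD χ hd hψχ))

end Piece


open scoped commutatorElement

section Assembly

theorem smallSupport_is_commutator (R : Subgroup (Cantor ≃ₜ Cantor))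
    (hR : ∀ f : Cantor ≃ₜ Cantor, f ∈ R ↔ IsRational f) (s : Cantor ≃ₜ Cantor)
    (hs : s ∈ R) (hss : HasSmallSupport s) :
    ∃ u v : Cantor ≃ₜ Cantor, u ∈ R ∧ v ∈ R ∧ s = ⁅u, v⁆ := by
  obtain ⟨E, hEclopen, hEne, hEuniv, hEfix⟩ := hss
  have hEc : (Eᶜ : Set Cantor).Nonempty := by
    rw [Set.nonempty_compl]
    exact hEuniv
  obtain ⟨p, hp⟩ := hEc
  obtain ⟨n0, hn0⟩ := exists_cone_subset hEclopen.compl.isOpen hp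
  set γ := prefixWord p (n0 + 1) with hγdef
  have hγsub : cone γ ⊆ Eᶜ := by
    rw [hγdef]
    exact (cone_prefixWord_mono p (by omega)).trans hn0
  set c := cH γ with hcdef
  have hcR : c ∈ R := (hR c).2 (cH_isRational γ)
  set s1 : Cantor ≃ₜ Cantor := c * s * c⁻¹ with hs1def
  have hs1R : s1 ∈ R := R.mul_mem (R.mul_mem hcR hs) (R.inv_mem hcR)
  have hsupp1 : ∀ ψ ∉ cone [true, false], s1 ψ = ψ := by
    intro ψ hψ
    have hfix : s (c.symm ψ) = c.symm ψ := by
      apply hEfix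
      intro hmem
      have h1 : prefixWord (c.symm ψ) γ.length ≠ γ := by
        intro heq
        have h2 : c.symm ψ ∈ cone γ := by
          rw [mem_cone_iff]
          exact heq
        exact (hγsub h2) hmem
      have h2 := cH_maps γ (c.symm ψ) h1
      rw [show cH γ (c.symm ψ) = ψ from c.apply_symm_apply ψ] at h2
      exact hψ h2
    show c (s (c.symm ψ)) = ψ
    rw [hfix, c.apply_symm_apply]
  obtain ⟨nT, T, hT⟩ := (hR s1).1 hs1R
  set A : Cantor ≃ₜ Cantor := aH (σof ⇑s1) (σof ⇑s1.symm)
    (continuous_σof _ s1.continuous) (continuous_σof _ s1.symm.continuous)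
    (σof_inv₁ s1 hsupp1) (σof_inv₂ s1 hsupp1) with hAdef
  have hAR : A ∈ R := by
    rw [hR]
    exact isRational_of_computes (aT nT T) (aT_computes nT T s1 hT hsupp1)
  have hXR : x0H ∈ R := (hR x0H).2 x0H_isRational
  have hcomm : s1 = ⁅A, x0H⁆ := by
    apply Homeomorph.ext
    intro ψ
    exact (swindle_eq s1 hsupp1 ψ).symm
  refine ⟨c⁻¹ * A * c, c⁻¹ * x0H * c,
    R.mul_mem (R.mul_mem (R.inv_mem hcR) hAR) hcR,
    R.mul_mem (R.mul_mem (R.inv_mem hcR) hXR) hcR, ?_⟩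
  have hsc : s = c⁻¹ * s1 * c := by
    rw [hs1def]
    group
  rw [hsc, hcomm]
  rw [commutatorElement_def, commutatorElement_def]
  group

theorem exists_small_decomp (R : Subgroup (Cantor ≃ₜ Cantor))
    (hR : ∀ f : Cantor ≃ₜ Cantor, f ∈ R ↔ IsRational f)
    (f : Cantor ≃ₜ Cantor) (hf : f ∈ R) (hne : f ≠ 1) :
    ∃ g : Cantor ≃ₜ Cantor, g ∈ R ∧ HasSmallSupport g ∧ HasSmallSupport (g * f) := by
  have hψ0 : ∃ ψ0, f ψ0 ≠ ψ0 := by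
    by_contra hc
    push_neg at hc
    exact hne (Homeomorph.ext hc)
  obtain ⟨ψ0, hψ0⟩ := hψ0
  have hm : ∃ m, f ψ0 m ≠ ψ0 m := by
    by_contra hc
    push_neg at hc
    exact hψ0 (funext hc)
  obtain ⟨m, hm⟩ := hm
  obtain ⟨n1, hn1⟩ := exists_cone_subset
    ((isClopen_cone (prefixWord (f ψ0) (m + 1))).isOpen.preimage f.continuous)
    (show ψ0 ∈ ⇑f ⁻¹' cone (prefixWord (f ψ0) (m + 1)) from self_mem_cone_prefixWord _ _)
  set n0 := max n1 (m + 2) with hn0def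
  have hn0ge : m + 2 ≤ n0 := le_max_right _ _
  set E := cone (prefixWord ψ0 n0) with hEdef
  have hEclopen : IsClopen E := isClopen_cone _
  have hEsub : E ⊆ ⇑f ⁻¹' cone (prefixWord (f ψ0) (m + 1)) :=
    (cone_prefixWord_mono ψ0 (le_max_left _ _)).trans hn1
  have hEco : ∀ χ ∈ E, f χ m = f ψ0 m := by
    intro χ hχ
    exact (mem_cone_prefixWord _ _ _).1 (hEsub hχ) m (by omega)
  have hEψm : ∀ χ ∈ E, χ m = ψ0 m := by
    intro χ hχ
    exact (mem_cone_prefixWord _ _ _).1 hχ m (by omega)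
  have hdisj : ∀ x ∈ E, x ∉ ⇑f '' E := by
    rintro x hxE ⟨χ, hχE, rfl⟩
    apply hm
    rw [← hEco χ hχE]
    exact hEψm _ hxE
  set g := pieceHomeo f E hEclopen hdisj with hgdef
  set ζ : Cantor := fun i => if i = n0 - 1 then !(ψ0 i) else ψ0 i with hζdef
  have hζm : ζ m = ψ0 m := by
    show (if m = n0 - 1 then !(ψ0 m) else ψ0 m) = ψ0 m
    rw [if_neg (by omega)]
  have hζE : ζ ∉ E := by
    intro hc
    have h1 := (mem_cone_prefixWord _ _ _).1 hc (n0 - 1) (by omega)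
    have h2 : (if n0 - 1 = n0 - 1 then !(ψ0 (n0 - 1)) else ψ0 (n0 - 1)) = ψ0 (n0 - 1) := h1
    rw [if_pos rfl] at h2
    simp at h2
  have hζfE : ζ ∉ ⇑f '' E := by
    rintro ⟨χ, hχE, hχ⟩
    apply hm
    rw [← hEco χ hχE, hχ]
    exact hζm
  -- rationality of g
  obtain ⟨Nf, hNf⟩ := clopen_saturated (isClopen_image f hEclopen)
  set N := max (max n0 Nf) 1 with hNdef
  have hN1 : 0 < N := lt_of_lt_of_le Nat.one_pos (le_max_right _ _)
  have hNn0 : n0 ≤ N := le_trans (le_max_left _ _) (le_max_left _ _)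
  have hNNf : Nf ≤ N := le_trans (le_max_right _ _) (le_max_left _ _)
  have hsatE : Saturated E N := by
    intro χ hχ
    have h1 : prefixWord χ n0 = prefixWord ψ0 n0 := mem_cone_pw_comm hχ
    calc cone (prefixWord χ N) ⊆ cone (prefixWord χ n0) := cone_prefixWord_mono χ hNn0
      _ = E := by rw [h1]
  have hsatF : Saturated (⇑f '' E) N := saturated_mono hNf hNNf
  obtain ⟨nf, Tf, hTf⟩ := (hR f).1 hf
  obtain ⟨ni, Ti, hTi⟩ := (hR f⁻¹).1 (R.inv_mem hf)
  have hTi' : Ti.Computes ⇑f.symm := hTi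
  set K := max (max nf ni) 1 with hKdef
  have hKf : nf ≤ K := le_trans (le_max_left _ _) (le_max_left _ _)
  have hKi : ni ≤ K := le_trans (le_max_right _ _) (le_max_left _ _)
  have hK1 : 1 ≤ K := le_max_right _ _
  classical
  have hgR : g ∈ R := by
    rw [hR]
    apply isRational_of_locally g N hN1 K
      (fun γ => if prepend γ (fun _ => false) ∈ E then Tf.pad hKf
        else if prepend γ (fun _ => false) ∈ ⇑f '' E then Ti.pad hKi else copyT.pad hK1)
      (fun γ => if prepend γ (fun _ => false) ∈ E then ⇑f
        else if prepend γ (fun _ => false) ∈ ⇑f '' E then ⇑f.symm else fun ψ => ψ)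
    · intro γ hγ
      by_cases h1 : prepend γ (fun _ => false) ∈ E
      · rw [if_pos h1, if_pos h1]
        exact Tf.pad_computes hKf hTf
      · rw [if_neg h1, if_neg h1]
        by_cases h2 : prepend γ (fun _ => false) ∈ ⇑f '' E
        · rw [if_pos h2, if_pos h2]
          exact Ti.pad_computes hKi hTi'
        · rw [if_neg h2, if_neg h2]
          exact copyT.pad_computes hK1 copyT_computes_id
    · intro γ hγ ξ
      have hbase : prepend γ ξ ∈ cone (prefixWord (prepend γ (fun _ => false)) N) := by
        rw [prefixWord_prepend_len γ _ hγ]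
        exact prepend_mem_cone γ ξ
      by_cases h1 : prepend γ (fun _ => false) ∈ E
      · rw [if_pos h1]
        have hmem : prepend γ ξ ∈ E := hsatE _ h1 hbase
        show pieceFun f E (prepend γ ξ) = f (prepend γ ξ)
        unfold pieceFun
        rw [if_pos hmem]
      · rw [if_neg h1]
        by_cases h2 : prepend γ (fun _ => false) ∈ ⇑f '' E
        · rw [if_pos h2]
          have hmem : prepend γ ξ ∈ ⇑f '' E := hsatF _ h2 hbase
          have hnotE : prepend γ ξ ∉ E := by
            intro hc
            apply h1
            apply hsatE _ hc
            rw [prefixWord_prepend_len γ _ hγ]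
            exact prepend_mem_cone γ _
          show pieceFun f E (prepend γ ξ) = f.symm (prepend γ ξ)
          unfold pieceFun
          rw [if_neg hnotE, if_pos hmem]
        · rw [if_neg h2]
          have hout := saturated_compl_mem hsatE hsatF
            (show prepend γ (fun _ => false) ∉ E ∪ ⇑f '' E by
              simp only [Set.mem_union]
              push_neg
              exact ⟨h1, h2⟩) hbase
          have hout2 : prepend γ ξ ∉ E ∪ ⇑f '' E := hout
          simp only [Set.mem_union] at hout2
          push_neg at hout2
          show pieceFun f E (prepend γ ξ) = prepend γ ξ
          unfold pieceFun
          rw [if_neg hout2.1, if_neg hout2.2]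
  refine ⟨g, hgR, ⟨E ∪ ⇑f '' E, hEclopen.union (isClopen_image f hEclopen),
    ⟨ψ0, Or.inl (self_mem_cone_prefixWord ψ0 n0)⟩, ?_, ?_⟩,
    ⟨Eᶜ, hEclopen.compl, ⟨ζ, hζE⟩, ?_, ?_⟩⟩
  · intro hc
    have hz : ζ ∈ E ∪ ⇑f '' E := by rw [hc]; trivial
    rcases hz with h | h
    · exact hζE h
    · exact hζfE h
  · intro ψ hψ
    simp only [Set.mem_union] at hψ
    push_neg at hψ
    show pieceFun f E ψ = ψ
    unfold pieceFun
    rw [if_neg hψ.1, if_neg hψ.2]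
  · intro hc
    have h1 : ψ0 ∈ Eᶜ := by rw [hc]; trivial
    exact h1 (self_mem_cone_prefixWord ψ0 n0)
  · intro ψ hψ
    simp only [Set.mem_compl_iff, not_not] at hψ
    show pieceFun f E (f ψ) = ψ
    have h2 : f ψ ∈ ⇑f '' E := ⟨ψ, hψ, rfl⟩
    have h3 : f ψ ∉ E := fun hc => hdisj _ hc h2
    unfold pieceFun
    rw [if_neg h3, if_pos h2, f.symm_apply_apply]

end Assembly


/-- the rational group `R` is generated by its elements of small support,
and consequently equals its commutator subgroup. -/
theorem smallSupport_generates (R : Subgroup (Cantor ≃ₜ Cantor))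
    (hR : ∀ f : Cantor ≃ₜ Cantor, f ∈ R ↔ IsRational f) :
    Subgroup.closure {g : ↥R | HasSmallSupport (g : Cantor ≃ₜ Cantor)} = ⊤ ∧
      commutator ↥R = ⊤ := by
  have hmem : ∀ f : ↥R,
      f ∈ Subgroup.closure {g : ↥R | HasSmallSupport (g : Cantor ≃ₜ Cantor)} := by
    intro f
    by_cases hf1 : (f : Cantor ≃ₜ Cantor) = 1
    · have h1 : f = 1 := Subtype.ext hf1
      rw [h1]
      exact one_mem _
    · obtain ⟨g, hgR, hg, hgf⟩ := exists_small_decomp R hR (f : Cantor ≃ₜ Cantor) f.2 hf1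
      set G : ↥R := ⟨g, hgR⟩ with hGdef
      have h1 : G ∈ {g : ↥R | HasSmallSupport (g : Cantor ≃ₜ Cantor)} := hg
      have h2 : G * f ∈ {g : ↥R | HasSmallSupport (g : Cantor ≃ₜ Cantor)} := hgf
      have h3 : f = G⁻¹ * (G * f) := by group
      rw [h3]
      exact mul_mem (inv_mem (Subgroup.subset_closure h1)) (Subgroup.subset_closure h2)
  constructor
  · rw [eq_top_iff]
    intro x _
    exact hmem x
  · have hle : Subgroup.closure {g : ↥R | HasSmallSupport (g : Cantor ≃ₜ Cantor)}
        ≤ ⁅(⊤ : Subgroup ↥R), (⊤ : Subgroup ↥R)⁆ := by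
      rw [Subgroup.closure_le]
      intro g hg
      obtain ⟨u, v, huR, hvR, huv⟩ :=
        smallSupport_is_commutator R hR (g : Cantor ≃ₜ Cantor) g.2 hg
      have h4 : g = ⁅(⟨u, huR⟩ : ↥R), (⟨v, hvR⟩ : ↥R)⁆ := Subtype.ext huv
      rw [h4]
      exact Subgroup.commutator_mem_commutator (Subgroup.mem_top _) (Subgroup.mem_top _)
    rw [commutator_def, eq_top_iff]
    intro x _
    exact hle (hmem x)
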